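/- arXiv:1805.01823 — 9 statements merged into one kernel-verified Lean document; each statement's English description precedes it below -/
import Mathlib

section
/- Let k ≥ 1 be an integer and let G be a finite simple graph such that the near-k-twin relation ρ_k of G is an equivalence relation on V(G). Let U and V be two (not necessarily distinct) equivalence classes of ρ_k, each with at least 4k+2 vertices. Then for every vertex v ∈ V we have min{|U ∩ N(v)|, |U \ N(v)|} ≤ 2k. -/
/-- Two vertices `u`, `v` of a simple graph `G` are *near-`k`-twins* if the symmetric
difference of their open neighbourhoods has at most `k` elements. -/
def nearTwin {V : Type*} (G : SimpleGraph V) (k : ℕ) (u v : V) : Prop :=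
  (symmDiff (G.neighborSet u) (G.neighborSet v)).ncard ≤ k

theorem stmt0 {V : Type*} [Fintype V] (G : SimpleGraph V) (k : ℕ) (hk : 1 ≤ k)
    (heq : Equivalence (nearTwin G k))
    (U W : Set V)
    (hU : ∃ u, U = {x | nearTwin G k u x})
    (hW : ∃ w, W = {x | nearTwin G k w x})
    (hUcard : 4 * k + 2 ≤ U.ncard) (hWcard : 4 * k + 2 ≤ W.ncard)
    (v : V) (hv : v ∈ W) :
    min ((U ∩ G.neighborSet v).ncard) ((U \ G.neighborSet v).ncard) ≤ 2 * k := by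
  classical
  by_contra hcon
  push_neg at hcon
  rw [lt_min_iff] at hcon
  obtain ⟨h1, h2⟩ := hcon
  obtain ⟨u0, hU⟩ := hU
  obtain ⟨w0, hW⟩ := hW
  -- any two members of U are near twins
  have hUU : ∀ a ∈ U, ∀ b ∈ U, nearTwin G k a b := by
    intro a ha b hb
    rw [hU] at ha hb
    exact heq.trans (heq.symm ha) hb
  have hvw : ∀ w ∈ W, nearTwin G k v w := by
    intro w hw
    rw [hW] at hv hw
    exact heq.trans (heq.symm hv) hw
  set S1 : Finset (V) := (U ∩ G.neighborSet v).toFinset with hS1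
  set S2 : Finset (V) := (U \ G.neighborSet v).toFinset with hS2
  set Wf : Finset (V) := W.toFinset with hWf
  have hS1card : S1.card = (U ∩ G.neighborSet v).ncard := (Set.ncard_eq_toFinset_card' _).symm
  have hS2card : S2.card = (U \ G.neighborSet v).ncard := (Set.ncard_eq_toFinset_card' _).symm
  have hWfcard : 4 * k + 2 ≤ Wf.card := by
    rw [hWf, ← Set.ncard_eq_toFinset_card']; exact hWcard
  obtain ⟨a1, ha1⟩ : ∃ a1, S1.card = a1 + k ∧ k + 1 ≤ a1 := by
    refine ⟨S1.card - k, ?_, ?_⟩ <;> omega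
  obtain ⟨a2, ha2⟩ : ∃ a2, S2.card = a2 + k ∧ k + 1 ≤ a2 := by
    refine ⟨S2.card - k, ?_, ?_⟩ <;> omega
  set T : Finset (V × V × V) :=
    (Wf ×ˢ S1 ×ˢ S2).filter
      (fun t => t.1 ∈ symmDiff (G.neighborSet t.2.1) (G.neighborSet t.2.2)) with hT
  -- lower bound
  have hlow : Wf.card * (a1 * a2) ≤ T.card := by
    have hfib : ∀ t ∈ T, t.1 ∈ Wf := by
      intro t ht
      rw [hT, Finset.mem_filter, Finset.mem_product] at ht
      exact ht.1.1
    rw [Finset.card_eq_sum_card_fiberwise hfib]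
    calc Wf.card * (a1 * a2) = ∑ _w ∈ Wf, (a1 * a2) := by
          rw [Finset.sum_const, smul_eq_mul]
      _ ≤ _ := ?_
    apply Finset.sum_le_sum
    intro w hw
    have hnt : nearTwin G k v w := hvw w (by rwa [hWf, Set.mem_toFinset] at hw)
    have hAcard : a1 ≤ (S1.filter (fun x => w ∈ G.neighborSet x)).card := by
      have hsplit := Finset.card_filter_add_card_filter_not
        (s := S1) (p := fun x => w ∈ G.neighborSet x)
      have hsub : S1.filter (fun x => ¬ w ∈ G.neighborSet x) ⊆
          (symmDiff (G.neighborSet v) (G.neighborSet w)).toFinset := by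
        intro x hx
        rw [Finset.mem_filter] at hx
        obtain ⟨hx1, hx2⟩ := hx
        rw [hS1, Set.mem_toFinset] at hx1
        rw [Set.mem_toFinset, Set.mem_symmDiff]
        left
        refine ⟨hx1.2, fun hxw => hx2 ?_⟩
        exact (hxw : G.Adj w x).symm
      have hle : (S1.filter (fun x => ¬ w ∈ G.neighborSet x)).card ≤ k := by
        calc (S1.filter (fun x => ¬ w ∈ G.neighborSet x)).card
            ≤ (symmDiff (G.neighborSet v) (G.neighborSet w)).toFinset.card :=
              Finset.card_le_card hsub
          _ = (symmDiff (G.neighborSet v) (G.neighborSet w)).ncard :=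
              (Set.ncard_eq_toFinset_card' _).symm
          _ ≤ k := hnt
      omega
    have hBcard : a2 ≤ (S2.filter (fun x => ¬ w ∈ G.neighborSet x)).card := by
      have hsplit := Finset.card_filter_add_card_filter_not
        (s := S2) (p := fun x => w ∈ G.neighborSet x)
      have hsub : S2.filter (fun x => w ∈ G.neighborSet x) ⊆
          (symmDiff (G.neighborSet v) (G.neighborSet w)).toFinset := by
        intro x hx
        rw [Finset.mem_filter] at hx
        obtain ⟨hx1, hx2⟩ := hx
        rw [hS2, Set.mem_toFinset] at hx1
        rw [Set.mem_toFinset, Set.mem_symmDiff]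
        right
        refine ⟨(hx2 : G.Adj x w).symm, fun hxv => hx1.2 hxv⟩
      have hle : (S2.filter (fun x => w ∈ G.neighborSet x)).card ≤ k := by
        calc (S2.filter (fun x => w ∈ G.neighborSet x)).card
            ≤ (symmDiff (G.neighborSet v) (G.neighborSet w)).toFinset.card :=
              Finset.card_le_card hsub
          _ = (symmDiff (G.neighborSet v) (G.neighborSet w)).ncard :=
              (Set.ncard_eq_toFinset_card' _).symm
          _ ≤ k := hnt
      omega
    calc a1 * a2
        ≤ (S1.filter (fun x => w ∈ G.neighborSet x)).card *
          (S2.filter (fun x => ¬ w ∈ G.neighborSet x)).card := Nat.mul_le_mul hAcard hBcard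
      _ = ((S1.filter (fun x => w ∈ G.neighborSet x)) ×ˢ
          (S2.filter (fun x => ¬ w ∈ G.neighborSet x))).card := (Finset.card_product _ _).symm
      _ ≤ (T.filter (fun t => t.1 = w)).card := by
          apply Finset.card_le_card_of_injOn (fun p => (w, p.1, p.2))
          · intro p hp
            rw [Finset.mem_coe, Finset.mem_product] at hp
            obtain ⟨hpa, hpb⟩ := hp
            rw [Finset.mem_filter] at hpa hpb
            rw [Finset.mem_coe, Finset.mem_filter, hT, Finset.mem_filter, Finset.mem_product,
              Finset.mem_product]
            refine ⟨⟨⟨hw, hpa.1, hpb.1⟩, ?_⟩, rfl⟩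
            rw [Set.mem_symmDiff]
            exact Or.inl ⟨hpa.2, hpb.2⟩
          · intro p _ q _ hpq
            simp only [Prod.mk.injEq] at hpq
            exact Prod.ext hpq.2.1 hpq.2.2
  -- upper bound
  have hup : T.card ≤ S1.card * S2.card * k := by
    have hfib : ∀ t ∈ T, t.2 ∈ S1 ×ˢ S2 := by
      intro t ht
      rw [hT, Finset.mem_filter, Finset.mem_product] at ht
      exact ht.1.2
    rw [Finset.card_eq_sum_card_fiberwise hfib]
    calc ∑ p ∈ S1 ×ˢ S2, (T.filter (fun t => t.2 = p)).card
        ≤ ∑ p ∈ S1 ×ˢ S2, k := by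
          apply Finset.sum_le_sum
          intro p hp
          rw [Finset.mem_product] at hp
          have hp1 : p.1 ∈ U := by
            have := hp.1; rw [hS1, Set.mem_toFinset] at this; exact this.1
          have hp2 : p.2 ∈ U := by
            have := hp.2; rw [hS2, Set.mem_toFinset] at this; exact this.1
          have hnt : nearTwin G k p.1 p.2 := hUU _ hp1 _ hp2
          calc (T.filter (fun t => t.2 = p)).card
              ≤ (symmDiff (G.neighborSet p.1) (G.neighborSet p.2)).toFinset.card := by
                apply Finset.card_le_card_of_injOn (fun t => t.1)
                · intro t ht
                  rw [Finset.mem_coe, Finset.mem_filter, hT, Finset.mem_filter] at ht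
                  rw [Finset.mem_coe, Set.mem_toFinset]
                  have := ht.1.2
                  rw [ht.2] at this
                  exact this
                · intro t ht s hs hts
                  simp only [Finset.coe_filter, Set.mem_setOf_eq] at ht hs
                  have hts' : t.1 = s.1 := hts
                  exact Prod.ext hts' (ht.2.trans hs.2.symm)
            _ = (symmDiff (G.neighborSet p.1) (G.neighborSet p.2)).ncard :=
                (Set.ncard_eq_toFinset_card' _).symm
            _ ≤ k := hnt
      _ = S1.card * S2.card * k := by
          rw [Finset.sum_const, Finset.card_product, smul_eq_mul]
  -- combine
  have hfinal : (4 * k + 2) * (a1 * a2) ≤ (a1 + k) * (a2 + k) * k := by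
    calc (4 * k + 2) * (a1 * a2) ≤ Wf.card * (a1 * a2) :=
          Nat.mul_le_mul_right _ hWfcard
      _ ≤ T.card := hlow
      _ ≤ S1.card * S2.card * k := hup
      _ = (a1 + k) * (a2 + k) * k := by rw [ha1.1, ha2.1]
  have hk1 : k + 1 ≤ a1 := ha1.2
  have hk2 : k + 1 ≤ a2 := ha2.2
  have e0 : 1 ≤ a1 * a2 := Nat.one_le_iff_ne_zero.mpr (by 
    intro h
    rcases Nat.mul_eq_zero.mp h with h' | h' <;> omega)
  have e1 : k * k * a1 ≤ k * (a1 * a2) := by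
    calc k * k * a1 = k * a1 * k := by ring
      _ ≤ k * a1 * a2 := Nat.mul_le_mul_left _ (by omega)
      _ = k * (a1 * a2) := by ring
  have e2 : k * k * a2 ≤ k * (a1 * a2) := by
    calc k * k * a2 = k * a2 * k := by ring
      _ ≤ k * a2 * a1 := Nat.mul_le_mul_left _ (by omega)
      _ = k * (a1 * a2) := by ring
  have e3 : k * k * k ≤ k * (a1 * a2) := by
    have : k * k ≤ a1 * a2 := Nat.mul_le_mul (by omega) (by omega)
    calc k * k * k = k * (k * k) := by ring
      _ ≤ k * (a1 * a2) := Nat.mul_le_mul_left _ this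
  have expand : (a1 + k) * (a2 + k) * k
      = k * (a1 * a2) + k * k * a1 + k * k * a2 + k * k * k := by ring
  have lhs : (4 * k + 2) * (a1 * a2) = 4 * (k * (a1 * a2)) + 2 * (a1 * a2) := by ring
  omega
end

section
/- Let k ≥ 1 be an integer and let G be a finite simple graph such that the near-k-twin relation ρ_k of G is an equivalence relation on V(G). Let U and V be two (not necessarily distinct) equivalence classes of ρ_k, each with at least 5k+1 vertices. Then exactly one of the following holds: (a) every vertex of U has at most 2k neighbours in V and every vertex of V has at most 2k neighbours in U; or (b) every vertex of U is adjacent to all but at most 2k vertices of V and every vertex of V is adjacent to all but at most 2k vertices of U. -/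
section Aux

open scoped Classical

variable {V : Type*} [Fintype V] {G : SimpleGraph V} {k : ℕ}

/-- Any finset of vertices that are all adjacent to `x` but not to `y` has size at most `k`,
provided `x` and `y` are near-`k`-twins. -/
private lemma helper_card {x y : V} (h : nearTwin G k x y) (s : Finset V) (p : V → Prop)
    [DecidablePred p] (hp : ∀ v, p v → G.Adj x v ∧ ¬ G.Adj y v) :
    (s.filter p).card ≤ k := by
  have hsub : ↑(s.filter p) ⊆ symmDiff (G.neighborSet x) (G.neighborSet y) := by
    intro v hv
    simp only [Finset.coe_filter, Set.mem_setOf_eq] at hv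
    have h2 := hp v hv.2
    rw [Set.mem_symmDiff]
    exact Or.inl ⟨h2.1, h2.2⟩
  calc (s.filter p).card = (↑(s.filter p) : Set V).ncard := (Set.ncard_coe_finset _).symm
    _ ≤ (symmDiff (G.neighborSet x) (G.neighborSet y)).ncard :=
        Set.ncard_le_ncard hsub (Set.toFinite _)
    _ ≤ k := h

/-- The key counting argument: no vertex can have both many neighbours and many
non-neighbours inside a near-twin class. -/
private lemma key (hk : 1 ≤ k) (U' A' B' : Finset V)
    (hm : 5 * k + 1 ≤ U'.card) (hA : 2 * k + 1 ≤ A'.card) (hB : 2 * k + 1 ≤ B'.card)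
    (hrowA : ∀ u ∈ U', (A'.filter fun w => ¬ G.Adj u w).card ≤ k)
    (hrowB : ∀ u ∈ U', (B'.filter fun w => G.Adj u w).card ≤ k)
    (hcol : ∀ w ∈ A', ∀ w' ∈ B',
      (U'.filter fun u => G.Adj u w ∧ ¬ G.Adj u w').card ≤ k) :
    False := by
  classical
  set T := ∑ u ∈ U', (A'.filter fun w => G.Adj u w).card *
      (B'.filter fun w => ¬ G.Adj u w).card with hT
  have hlow : U'.card * ((A'.card - k) * (B'.card - k)) ≤ T := by
    have hterm : ∀ u ∈ U', (A'.card - k) * (B'.card - k) ≤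
        (A'.filter fun w => G.Adj u w).card * (B'.filter fun w => ¬ G.Adj u w).card := by
      intro u hu
      have h1 := hrowA u hu
      have h2 := hrowB u hu
      have e1 : (A'.filter fun w => G.Adj u w).card
          + (A'.filter fun w => ¬ G.Adj u w).card = A'.card :=
        Finset.card_filter_add_card_filter_not _
      have e2 : (B'.filter fun w => G.Adj u w).card
          + (B'.filter fun w => ¬ G.Adj u w).card = B'.card :=
        Finset.card_filter_add_card_filter_not _
      exact Nat.mul_le_mul (by omega) (by omega)
    calc U'.card * ((A'.card - k) * (B'.card - k))
        = ∑ _u ∈ U', ((A'.card - k) * (B'.card - k)) := by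
          rw [Finset.sum_const, smul_eq_mul]
      _ ≤ T := Finset.sum_le_sum hterm
  have hupper : T ≤ A'.card * (B'.card * k) := by
    have hprod : ∀ u : V, (A'.filter fun w => G.Adj u w).card *
        (B'.filter fun w => ¬ G.Adj u w).card
        = ∑ w ∈ A', ∑ w' ∈ B', (if G.Adj u w ∧ ¬ G.Adj u w' then 1 else 0) := by
      intro u
      rw [Finset.card_filter, Finset.card_filter, Finset.sum_mul_sum]
      refine Finset.sum_congr rfl fun w _ => Finset.sum_congr rfl fun w' _ => ?_
      by_cases h1 : G.Adj u w <;> by_cases h2 : G.Adj u w' <;> simp [h1, h2]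
    have hswap : T = ∑ w ∈ A', ∑ w' ∈ B',
        (U'.filter fun u => G.Adj u w ∧ ¬ G.Adj u w').card := by
      rw [hT]
      rw [Finset.sum_congr rfl fun u _ => hprod u]
      rw [Finset.sum_comm]
      refine Finset.sum_congr rfl fun w _ => ?_
      rw [Finset.sum_comm]
      refine Finset.sum_congr rfl fun w' _ => ?_
      rw [Finset.card_filter]
    rw [hswap]
    calc ∑ w ∈ A', ∑ w' ∈ B', (U'.filter fun u => G.Adj u w ∧ ¬ G.Adj u w').card
        ≤ ∑ w ∈ A', ∑ _w' ∈ B', k :=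
          Finset.sum_le_sum fun w hw => Finset.sum_le_sum fun w' hw' => hcol w hw w' hw'
      _ = A'.card * (B'.card * k) := by
          simp [Finset.sum_const, smul_eq_mul, mul_assoc]
  obtain ⟨x, hx, hxe⟩ : ∃ x, k + 1 ≤ x ∧ A'.card = x + k := ⟨A'.card - k, by omega, by omega⟩
  obtain ⟨y, hy, hye⟩ : ∃ y, k + 1 ≤ y ∧ B'.card = y + k := ⟨B'.card - k, by omega, by omega⟩
  have hf2 : (5 * k + 1) * (x * y) ≤ (x + k) * ((y + k) * k) := by
    calc (5 * k + 1) * (x * y) ≤ U'.card * (x * y) := Nat.mul_le_mul_right _ hm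
      _ = U'.card * ((A'.card - k) * (B'.card - k)) := by
          rw [hxe, hye]
          congr 2 <;> omega
      _ ≤ T := hlow
      _ ≤ A'.card * (B'.card * k) := hupper
      _ = (x + k) * ((y + k) * k) := by rw [hxe, hye]
  have e1 : (k + 1) * (x + k) ≤ (2 * k + 1) * x := by nlinarith
  have e2 : (k + 1) * (y + k) ≤ (2 * k + 1) * y := by nlinarith
  have hxy : 0 < x * y := Nat.mul_pos (by omega) (by omega)
  have hcancel : (k + 1) * (k + 1) * (5 * k + 1) ≤ k * ((2 * k + 1) * (2 * k + 1)) := by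
    have hchain : ((k + 1) * (k + 1) * (5 * k + 1)) * (x * y)
        ≤ (k * ((2 * k + 1) * (2 * k + 1))) * (x * y) := by
      calc ((k + 1) * (k + 1) * (5 * k + 1)) * (x * y)
          = (k + 1) * (k + 1) * ((5 * k + 1) * (x * y)) := by ring
        _ ≤ (k + 1) * (k + 1) * ((x + k) * ((y + k) * k)) := Nat.mul_le_mul_left _ hf2
        _ = k * (((k + 1) * (x + k)) * ((k + 1) * (y + k))) := by ring
        _ ≤ k * (((2 * k + 1) * x) * ((2 * k + 1) * y)) :=
            Nat.mul_le_mul_left _ (Nat.mul_le_mul e1 e2)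
        _ = (k * ((2 * k + 1) * (2 * k + 1))) * (x * y) := by ring
    exact Nat.le_of_mul_le_mul_right hchain hxy
  nlinarith [hcancel, hk]

/-- Neighbourhood sizes within a fixed finset differ by at most `k` for near-twins. -/
private lemma cmp_card {u' u : V} (h : nearTwin G k u' u) (Wf : Finset V) :
    (Wf.filter fun w => ¬ G.Adj u w).card ≤ (Wf.filter fun w => ¬ G.Adj u' w).card + k := by
  classical
  have hsub : (Wf.filter fun w => ¬ G.Adj u w) ⊆
      (Wf.filter fun w => ¬ G.Adj u' w) ∪ (Wf.filter fun w => G.Adj u' w ∧ ¬ G.Adj u w) := by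
    intro w hw
    simp only [Finset.mem_filter, Finset.mem_union] at *
    by_cases hadj : G.Adj u' w
    · exact Or.inr ⟨hw.1, hadj, hw.2⟩
    · exact Or.inl ⟨hw.1, hadj⟩
  calc (Wf.filter fun w => ¬ G.Adj u w).card
      ≤ ((Wf.filter fun w => ¬ G.Adj u' w) ∪
          (Wf.filter fun w => G.Adj u' w ∧ ¬ G.Adj u w)).card := Finset.card_le_card hsub
    _ ≤ (Wf.filter fun w => ¬ G.Adj u' w).card
        + (Wf.filter fun w => G.Adj u' w ∧ ¬ G.Adj u w).card := Finset.card_union_le _ _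
    _ ≤ (Wf.filter fun w => ¬ G.Adj u' w).card + k := by
        have := helper_card h Wf (fun w => G.Adj u' w ∧ ¬ G.Adj u w) (fun v hv => hv)
        omega

/-- Dichotomy for a single class direction: every vertex of `Uf` sees either few or
co-few vertices of `Wf`. -/
private lemma side (hk : 1 ≤ k) (Uf Wf : Finset V)
    (hm : 5 * k + 1 ≤ Uf.card) (hn : 5 * k + 1 ≤ Wf.card)
    (htwU : ∀ x ∈ Uf, ∀ y ∈ Uf, nearTwin G k x y)
    (htwW : ∀ x ∈ Wf, ∀ y ∈ Wf, nearTwin G k x y) :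
    (∀ u ∈ Uf, (Wf.filter fun w => G.Adj u w).card ≤ 2 * k) ∨
    (∀ u ∈ Uf, (Wf.filter fun w => ¬ G.Adj u w).card ≤ 2 * k) := by
  classical
  have hthr : ∀ u ∈ Uf, (Wf.filter fun w => G.Adj u w).card ≤ 2 * k ∨
      (Wf.filter fun w => ¬ G.Adj u w).card ≤ 2 * k := by
    intro u hu
    by_contra hcon
    push_neg at hcon
    obtain ⟨h1, h2⟩ := hcon
    refine key (G := G) hk Uf (Wf.filter fun w => G.Adj u w) (Wf.filter fun w => ¬ G.Adj u w)
      hm (by omega) (by omega) ?_ ?_ ?_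
    · intro u' hu'
      rw [Finset.filter_filter]
      exact helper_card (htwU u hu u' hu') Wf _ (fun v hv => hv)
    · intro u' hu'
      rw [Finset.filter_filter]
      exact helper_card (htwU u' hu' u hu) Wf _ (fun v hv => ⟨hv.2, hv.1⟩)
    · intro w hw w' hw'
      have hwW : w ∈ Wf := (Finset.mem_filter.mp hw).1
      have hw'W : w' ∈ Wf := (Finset.mem_filter.mp hw').1
      exact helper_card (htwW w hwW w' hw'W) Uf _
        (fun v hv => ⟨hv.1.symm, fun hc => hv.2 hc.symm⟩)
  by_cases hP : ∀ u ∈ Uf, (Wf.filter fun w => G.Adj u w).card ≤ 2 * k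
  · exact Or.inl hP
  · push_neg at hP
    obtain ⟨u₁, hu₁, hbig⟩ := hP
    have hdiff₁ : (Wf.filter fun w => ¬ G.Adj u₁ w).card ≤ 2 * k := by
      rcases hthr u₁ hu₁ with h | h
      · omega
      · exact h
    refine Or.inr fun u hu => ?_
    rcases hthr u hu with h | h
    · exfalso
      have e := Finset.card_filter_add_card_filter_not
        (s := Wf) (p := fun w => G.Adj u w)
      have hc := cmp_card (htwU u₁ hu₁ u hu) Wf
      omega
    · exact h

/-- The mixed case (few neighbours one way, co-few the other way) is impossible. -/
private lemma mixed (hk : 1 ≤ k) (Uf Wf : Finset V)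
    (hm : 5 * k + 1 ≤ Uf.card) (hn : 5 * k + 1 ≤ Wf.card)
    (hP : ∀ u ∈ Uf, (Wf.filter fun w => G.Adj u w).card ≤ 2 * k)
    (hQ : ∀ w ∈ Wf, (Uf.filter fun u => ¬ G.Adj w u).card ≤ 2 * k) : False := by
  classical
  have hswap : ∑ u ∈ Uf, (Wf.filter fun w => G.Adj u w).card
      = ∑ w ∈ Wf, (Uf.filter fun u => G.Adj w u).card := by
    simp only [Finset.card_filter]
    rw [Finset.sum_comm]
    refine Finset.sum_congr rfl fun w _ => Finset.sum_congr rfl fun u _ => ?_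
    rw [G.adj_comm]
  have hup : ∑ u ∈ Uf, (Wf.filter fun w => G.Adj u w).card ≤ Uf.card * (2 * k) := by
    calc ∑ u ∈ Uf, (Wf.filter fun w => G.Adj u w).card
        ≤ ∑ _u ∈ Uf, 2 * k := Finset.sum_le_sum hP
      _ = Uf.card * (2 * k) := by rw [Finset.sum_const, smul_eq_mul]
  have hlo : Wf.card * (Uf.card - 2 * k) ≤ ∑ w ∈ Wf, (Uf.filter fun u => G.Adj w u).card := by
    have hterm : ∀ w ∈ Wf, Uf.card - 2 * k ≤ (Uf.filter fun u => G.Adj w u).card := by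
      intro w hw
      have e : (Uf.filter fun u => G.Adj w u).card
          + (Uf.filter fun u => ¬ G.Adj w u).card = Uf.card :=
        Finset.card_filter_add_card_filter_not _
      have := hQ w hw
      omega
    calc Wf.card * (Uf.card - 2 * k) = ∑ _w ∈ Wf, (Uf.card - 2 * k) := by
          rw [Finset.sum_const, smul_eq_mul]
      _ ≤ _ := Finset.sum_le_sum hterm
  obtain ⟨m', hm1, hm2⟩ : ∃ m', 3 * k + 1 ≤ m' ∧ Uf.card = m' + 2 * k :=
    ⟨Uf.card - 2 * k, by omega, by omega⟩
  have hfin : Wf.card * m' ≤ (m' + 2 * k) * (2 * k) := by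
    have h1 : Wf.card * (Uf.card - 2 * k) ≤ Uf.card * (2 * k) := by
      calc Wf.card * (Uf.card - 2 * k) ≤ _ := hlo
        _ = ∑ u ∈ Uf, (Wf.filter fun w => G.Adj u w).card := hswap.symm
        _ ≤ Uf.card * (2 * k) := hup
    have h2 : Uf.card - 2 * k = m' := by omega
    rw [h2, hm2] at h1
    exact h1
  have a1 : (5 * k + 1) * m' ≤ Wf.card * m' := Nat.mul_le_mul hn le_rfl
  have a2 : Wf.card * m' ≤ 2 * k * m' + 4 * (k * k) := by nlinarith [hfin]
  have a3 : (3 * k + 1) * m' ≤ 4 * (k * k) := by nlinarith [a1, a2]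
  have a4 : (3 * k + 1) * (3 * k + 1) ≤ 4 * (k * k) :=
    le_trans (Nat.mul_le_mul le_rfl hm1) a3
  nlinarith [a4, hk]

end Aux

theorem stmt1 {V : Type*} [Fintype V] (G : SimpleGraph V) (k : ℕ) (hk : 1 ≤ k)
    (heq : Equivalence (nearTwin G k))
    (U W : Set V)
    (hU : ∃ u, U = {x | nearTwin G k u x})
    (hW : ∃ w, W = {x | nearTwin G k w x})
    (hUcard : 5 * k + 1 ≤ U.ncard) (hWcard : 5 * k + 1 ≤ W.ncard) :
    Xor'
      ((∀ u ∈ U, (W ∩ G.neighborSet u).ncard ≤ 2 * k) ∧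
        (∀ w ∈ W, (U ∩ G.neighborSet w).ncard ≤ 2 * k))
      ((∀ u ∈ U, (W \ G.neighborSet u).ncard ≤ 2 * k) ∧
        (∀ w ∈ W, (U \ G.neighborSet w).ncard ≤ 2 * k)) := by
  classical
  obtain ⟨u₀, hU0⟩ := hU
  obtain ⟨w₀, hW0⟩ := hW
  have htwU : ∀ x ∈ U, ∀ y ∈ U, nearTwin G k x y := by
    intro x hx y hy
    rw [hU0] at hx hy
    exact heq.trans (heq.symm hx) hy
  have htwW : ∀ x ∈ W, ∀ y ∈ W, nearTwin G k x y := by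
    intro x hx y hy
    rw [hW0] at hx hy
    exact heq.trans (heq.symm hx) hy
  have hu₀ : u₀ ∈ U := by rw [hU0]; exact heq.refl u₀
  have hUfin : U.Finite := Set.toFinite U
  have hWfin : W.Finite := Set.toFinite W
  set Uf := hUfin.toFinset with hUfdef
  set Wf := hWfin.toFinset with hWfdef
  have hmemU : ∀ x, x ∈ Uf ↔ x ∈ U := fun x => Set.Finite.mem_toFinset _
  have hmemW : ∀ x, x ∈ Wf ↔ x ∈ W := fun x => Set.Finite.mem_toFinset _
  have hm : 5 * k + 1 ≤ Uf.card := by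
    rwa [Set.ncard_eq_toFinset_card U hUfin] at hUcard
  have hn : 5 * k + 1 ≤ Wf.card := by
    rwa [Set.ncard_eq_toFinset_card W hWfin] at hWcard
  have hconvWI : ∀ u, (W ∩ G.neighborSet u).ncard = (Wf.filter fun w => G.Adj u w).card := by
    intro u
    rw [← Set.ncard_coe_finset]
    congr 1
    ext w
    simp [hmemW w, SimpleGraph.mem_neighborSet]
  have hconvWD : ∀ u, (W \ G.neighborSet u).ncard = (Wf.filter fun w => ¬ G.Adj u w).card := by
    intro u
    rw [← Set.ncard_coe_finset]
    congr 1
    ext w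
    simp [hmemW w, SimpleGraph.mem_neighborSet]
  have hconvUI : ∀ w, (U ∩ G.neighborSet w).ncard = (Uf.filter fun u => G.Adj w u).card := by
    intro w
    rw [← Set.ncard_coe_finset]
    congr 1
    ext u
    simp [hmemU u, SimpleGraph.mem_neighborSet]
  have hconvUD : ∀ w, (U \ G.neighborSet w).ncard = (Uf.filter fun u => ¬ G.Adj w u).card := by
    intro w
    rw [← Set.ncard_coe_finset]
    congr 1
    ext u
    simp [hmemU u, SimpleGraph.mem_neighborSet]
  have htwUf : ∀ x ∈ Uf, ∀ y ∈ Uf, nearTwin G k x y :=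
    fun x hx y hy => htwU x ((hmemU x).mp hx) y ((hmemU y).mp hy)
  have htwWf : ∀ x ∈ Wf, ∀ y ∈ Wf, nearTwin G k x y :=
    fun x hx y hy => htwW x ((hmemW x).mp hx) y ((hmemW y).mp hy)
  have hu₀f : u₀ ∈ Uf := (hmemU u₀).mpr hu₀
  have hsplit : ∀ u, (Wf.filter fun w => G.Adj u w).card
      + (Wf.filter fun w => ¬ G.Adj u w).card = Wf.card :=
    fun u => Finset.card_filter_add_card_filter_not _
  have hsU := side hk Uf Wf hm hn htwUf htwWf
  have hsW := side hk Wf Uf hn hm htwWf htwUf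
  simp only [hconvWI, hconvWD, hconvUI, hconvUD]
  rcases hsU with hPU | hQU <;> rcases hsW with hPW | hQW
  · -- case (a)
    refine Or.inl ⟨⟨fun u hu => hPU u ((hmemU u).mpr hu),
      fun w hw => hPW w ((hmemW w).mpr hw)⟩, ?_⟩
    rintro ⟨hb1, hb2⟩
    have h1 := hb1 u₀ hu₀
    have h2 := hPU u₀ hu₀f
    have h3 := hsplit u₀
    omega
  · exact absurd (mixed hk Uf Wf hm hn hPU hQW) not_false
  · exact absurd (mixed hk Wf Uf hn hm hPW hQU) not_false
  · -- case (b)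
    refine Or.inr ⟨⟨fun u hu => hQU u ((hmemU u).mpr hu),
      fun w hw => hQW w ((hmemW w).mpr hw)⟩, ?_⟩
    rintro ⟨ha1, ha2⟩
    have h1 := ha1 u₀ hu₀
    have h2 := hQU u₀ hu₀f
    have h3 := hsplit u₀
    omega
end

section
/- Let k ≥ 1 be an integer and let G be a finite simple graph such that the near-k-twin relation ρ_k of G is an equivalence relation on V(G). Let U be an equivalence class of ρ_k with at least 5k+1 vertices. Then either every vertex of U has at most 2k neighbours in U, or every vertex of U has at least |U| − 2k neighbours in U (and these two alternatives are mutually exclusive). -/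
private lemma dcount {V : Type*} (A B : Finset V) (r : V → V → Prop) [DecidableRel r] :
    ∑ b ∈ B, (A.filter fun a => r a b).card = ∑ a ∈ A, (B.filter fun b => r a b).card := by
  simp_rw [Finset.card_filter]
  exact Finset.sum_comm

theorem stmt2 {V : Type*} [Fintype V] (G : SimpleGraph V) (k : ℕ) (hk : 1 ≤ k)
    (heq : Equivalence (nearTwin G k))
    (U : Set V)
    (hU : ∃ u, U = {x | nearTwin G k u x})
    (hUcard : 5 * k + 1 ≤ U.ncard) :
    Xor'
      (∀ u ∈ U, (U ∩ G.neighborSet u).ncard ≤ 2 * k)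
      (∀ u ∈ U, U.ncard - 2 * k ≤ (U ∩ G.neighborSet u).ncard) := by
  classical
  obtain ⟨u₀, hU0⟩ := hU
  have hrel : ∀ x ∈ U, ∀ y ∈ U, nearTwin G k x y := by
    intro x hx y hy
    rw [hU0] at hx hy
    exact heq.trans (heq.symm hx) hy
  set deg : V → ℕ := fun x => (U ∩ G.neighborSet x).ncard with hdegdef
  -- degrees within U differ pairwise by at most k
  have hclose : ∀ x ∈ U, ∀ y ∈ U, deg x ≤ deg y + k := by
    intro x hx y hy
    have hsub : U ∩ G.neighborSet x ⊆
        (U ∩ G.neighborSet y) ∪ symmDiff (G.neighborSet x) (G.neighborSet y) := by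
      rintro a ⟨haU, hax⟩
      by_cases hay : a ∈ G.neighborSet y
      · exact Or.inl ⟨haU, hay⟩
      · exact Or.inr (Set.mem_symmDiff.mpr (Or.inl ⟨hax, hay⟩))
    calc deg x ≤ ((U ∩ G.neighborSet y) ∪
          symmDiff (G.neighborSet x) (G.neighborSet y)).ncard :=
          Set.ncard_le_ncard hsub (Set.toFinite _)
      _ ≤ (U ∩ G.neighborSet y).ncard +
          (symmDiff (G.neighborSet x) (G.neighborSet y)).ncard := Set.ncard_union_le _ _
      _ ≤ deg y + k := add_le_add le_rfl (hrel x hx y hy)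
  -- core: a vertex of large degree has degree at least |U| - 2k
  have hcore : ∀ u ∈ U, 2 * k + 1 ≤ deg u → U.ncard - 2 * k ≤ deg u := by
    intro u hu hdu
    set A := U ∩ G.neighborSet u with hA
    set B := U \ insert u (G.neighborSet u) with hB
    have hdA : deg u = A.ncard := rfl
    set d := A.ncard with hd
    have claim2 : ∀ b ∈ B, d ≤ (A ∩ G.neighborSet b).ncard + k := by
      intro b hb
      have hsub : A ⊆ (A ∩ G.neighborSet b) ∪
          symmDiff (G.neighborSet u) (G.neighborSet b) := by
        intro a ha
        by_cases hab : a ∈ G.neighborSet b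
        · exact Or.inl ⟨ha, hab⟩
        · exact Or.inr (Set.mem_symmDiff.mpr (Or.inl ⟨ha.2, hab⟩))
      calc d ≤ ((A ∩ G.neighborSet b) ∪
            symmDiff (G.neighborSet u) (G.neighborSet b)).ncard :=
            Set.ncard_le_ncard hsub (Set.toFinite _)
        _ ≤ (A ∩ G.neighborSet b).ncard +
            (symmDiff (G.neighborSet u) (G.neighborSet b)).ncard := Set.ncard_union_le _ _
        _ ≤ (A ∩ G.neighborSet b).ncard + k := add_le_add le_rfl (hrel u hu b hb.1)
    have claim3 : ∀ a ∈ A, (B ∩ G.neighborSet a).ncard ≤ k := by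
      intro a ha
      have hsub : B ∩ G.neighborSet a ⊆
          symmDiff (G.neighborSet u) (G.neighborSet a) := by
        rintro x ⟨hxB, hxa⟩
        exact Set.mem_symmDiff.mpr
          (Or.inr ⟨hxa, fun hxu => hxB.2 (Set.mem_insert_of_mem _ hxu)⟩)
      exact le_trans (Set.ncard_le_ncard hsub (Set.toFinite _)) (hrel u hu a ha.1)
    -- pass to finsets for double counting
    set Af := A.toFinite.toFinset with hAf
    set Bf := B.toFinite.toFinset with hBf
    have hAfcard : Af.card = d := (Set.ncard_eq_toFinset_card A A.toFinite).symm
    have hBfcard : Bf.card = B.ncard := (Set.ncard_eq_toFinset_card B B.toFinite).symm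
    have key1 : ∀ b, (A ∩ G.neighborSet b).ncard = (Af.filter fun a => G.Adj a b).card := by
      intro b
      rw [Set.ncard_eq_toFinset_card _ (Set.toFinite _)]
      congr 1
      ext a
      simp only [Set.Finite.mem_toFinset, Set.mem_inter_iff, SimpleGraph.mem_neighborSet,
        Finset.mem_filter, hAf]
      rw [G.adj_comm]
    have key2 : ∀ a, (B ∩ G.neighborSet a).ncard = (Bf.filter fun b => G.Adj a b).card := by
      intro a
      rw [Set.ncard_eq_toFinset_card _ (Set.toFinite _)]
      congr 1
      ext b
      simp only [Set.Finite.mem_toFinset, Set.mem_inter_iff, SimpleGraph.mem_neighborSet,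
        Finset.mem_filter, hBf]
    have hsum1 : Bf.card * d ≤ (∑ b ∈ Bf, (Af.filter fun a => G.Adj a b).card) + Bf.card * k := by
      have : ∑ b ∈ Bf, d ≤ ∑ b ∈ Bf, ((Af.filter fun a => G.Adj a b).card + k) := by
        refine Finset.sum_le_sum fun b hb => ?_
        rw [← key1]
        exact claim2 b (B.toFinite.mem_toFinset.mp hb)
      simpa [Finset.sum_add_distrib, Finset.sum_const, smul_eq_mul] using this
    have hsum2 : (∑ a ∈ Af, (Bf.filter fun b => G.Adj a b).card) ≤ d * k := by
      calc (∑ a ∈ Af, (Bf.filter fun b => G.Adj a b).card) ≤ ∑ a ∈ Af, k := by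
            refine Finset.sum_le_sum fun a ha => ?_
            rw [← key2]
            exact claim3 a (A.toFinite.mem_toFinset.mp ha)
        _ = d * k := by rw [Finset.sum_const, smul_eq_mul, hAfcard]
    have hmain : B.ncard * d ≤ d * k + B.ncard * k := by
      have := dcount Af Bf (fun a b => G.Adj a b)
      rw [← hBfcard]
      calc Bf.card * d ≤ (∑ b ∈ Bf, (Af.filter fun a => G.Adj a b).card) + Bf.card * k := hsum1
        _ = (∑ a ∈ Af, (Bf.filter fun b => G.Adj a b).card) + Bf.card * k := by rw [this]
        _ ≤ d * k + Bf.card * k := add_le_add hsum2 le_rfl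
    -- B is small
    have hBsmall : B.ncard < 2 * k := by
      by_contra hge
      push_neg at hge
      nlinarith [hmain, hdu, hk, hdA]
    -- cover U by A, B and {u}
    have hcover : U.ncard ≤ d + B.ncard + 1 := by
      have hsub : U ⊆ (A ∪ B) ∪ {u} := by
        intro x hx
        by_cases hxu : x = u
        · exact Or.inr (by simp [hxu])
        by_cases hxn : x ∈ G.neighborSet u
        · exact Or.inl (Or.inl ⟨hx, hxn⟩)
        · exact Or.inl (Or.inr ⟨hx, fun h => by
            rcases Set.mem_insert_iff.mp h with h | h
            · exact hxu h
            · exact hxn h⟩)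
      calc U.ncard ≤ ((A ∪ B) ∪ {u}).ncard := Set.ncard_le_ncard hsub (Set.toFinite _)
        _ ≤ (A ∪ B).ncard + ({u} : Set V).ncard := Set.ncard_union_le _ _
        _ ≤ (A.ncard + B.ncard) + 1 := by
            gcongr
            · exact Set.ncard_union_le _ _
            · simp
    omega
  -- now the dichotomy
  have hUne : U.Nonempty := by
    rw [Set.nonempty_iff_ne_empty]
    intro h
    rw [h, Set.ncard_empty] at hUcard
    omega
  obtain ⟨w, hw⟩ := hUne
  by_cases hsmall : ∀ u ∈ U, (U ∩ G.neighborSet u).ncard ≤ 2 * k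
  · left
    refine ⟨hsmall, fun hbig => ?_⟩
    have h1 := hsmall w hw
    have h2 := hbig w hw
    omega
  · right
    push_neg at hsmall
    obtain ⟨u, hu, hdu⟩ := hsmall
    have hdu' : 2 * k + 1 ≤ deg u := hdu
    have hubig : U.ncard - 2 * k ≤ deg u := hcore u hu hdu'
    refine ⟨fun v hv => ?_, fun hsm => by
      have := hsm u hu
      exact absurd this (by omega)⟩
    have hvd : 2 * k + 1 ≤ deg v := by
      have := hclose u hu v hv
      omega
    exact hcore v hv hvd
end

section
/- For every class 𝒞 of finite simple graphs, the following are equivalent: (1) 𝒞 is near-uniform, i.e., there exist k₀, p ∈ ℕ such that every graph in 𝒞 is (k₀,p)-near-uniform; (2) 𝒞 is near-covered, i.e., there exist ℓ, q ∈ ℕ such that every graph in 𝒞 is (ℓ,q)-near-covered. -/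
/-- A graph is `(k₀, p)`-near-uniform if for some `k ≤ k₀` the near-`k`-twin relation is
an equivalence relation with at most `p` equivalence classes. -/
def NearUniform {V : Type*} (G : SimpleGraph V) (k₀ p : ℕ) : Prop :=
  ∃ k ≤ k₀, Equivalence (nearTwin G k) ∧
    {C : Set V | ∃ u, C = {v | nearTwin G k u v}}.ncard ≤ p

/-- A graph is `(ℓ, q)`-near-covered if there is a set `S` of at most `q` vertices such that
every vertex is a near-`ℓ`-twin of some element of `S`. -/
def NearCovered {V : Type*} (G : SimpleGraph V) (ℓ q : ℕ) : Prop :=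
  ∃ S : Set V, S.ncard ≤ q ∧ ∀ v, ∃ s ∈ S, nearTwin G ℓ s v

/-- The "distance" between two vertices: size of symmetric difference of neighbourhoods. -/
private noncomputable def dG {n : ℕ} (G : SimpleGraph (Fin n)) (u v : Fin n) : ℕ :=
  (symmDiff (G.neighborSet u) (G.neighborSet v)).ncard

private lemma nearTwin_iff_dG {n : ℕ} (G : SimpleGraph (Fin n)) (k : ℕ) (u v : Fin n) :
    nearTwin G k u v ↔ dG G u v ≤ k := Iff.rfl

private lemma dG_self {n : ℕ} (G : SimpleGraph (Fin n)) (u : Fin n) : dG G u u = 0 := by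
  simp [dG, symmDiff_self]

private lemma dG_comm {n : ℕ} (G : SimpleGraph (Fin n)) (u v : Fin n) :
    dG G u v = dG G v u := by
  simp [dG, symmDiff_comm]

private lemma dG_triangle {n : ℕ} (G : SimpleGraph (Fin n)) (u v w : Fin n) :
    dG G u w ≤ dG G u v + dG G v w := by
  have hsub : symmDiff (G.neighborSet u) (G.neighborSet w) ⊆
      symmDiff (G.neighborSet u) (G.neighborSet v) ∪
        symmDiff (G.neighborSet v) (G.neighborSet w) :=
    symmDiff_triangle _ _ _
  exact le_trans (Set.ncard_le_ncard hsub (Set.toFinite _)) (Set.ncard_union_le _ _)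

private lemma nt_refl {n : ℕ} (G : SimpleGraph (Fin n)) (k : ℕ) (u : Fin n) :
    nearTwin G k u u := by
  rw [nearTwin_iff_dG, dG_self]; exact Nat.zero_le _

private lemma nt_symm {n : ℕ} {G : SimpleGraph (Fin n)} {k : ℕ} {u v : Fin n}
    (h : nearTwin G k u v) : nearTwin G k v u := by
  rw [nearTwin_iff_dG, dG_comm]; exact h

private lemma uniform_to_covered {n k₀ p : ℕ} (G : SimpleGraph (Fin n))
    (h : NearUniform G k₀ p) : NearCovered G k₀ p := by
  obtain ⟨k, hk, heq, hcard⟩ := h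
  rcases isEmpty_or_nonempty (Fin n) with he | hne
  · exact ⟨∅, by simp, fun v => (he.false v).elim⟩
  · have hsel : ∀ C ∈ {C : Set (Fin n) | ∃ u, C = {v | nearTwin G k u v}}, ∃ x, x ∈ C := by
      rintro C ⟨u, rfl⟩
      exact ⟨u, heq.refl u⟩
    choose! f hf using hsel
    refine ⟨f '' {C : Set (Fin n) | ∃ u, C = {v | nearTwin G k u v}}, ?_, ?_⟩
    · exact le_trans (Set.ncard_image_le (Set.toFinite _)) hcard
    · intro v
      have hv : ({w | nearTwin G k v w} : Set (Fin n)) ∈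
          {C : Set (Fin n) | ∃ u, C = {v' | nearTwin G k u v'}} := ⟨v, rfl⟩
      refine ⟨f _, Set.mem_image_of_mem f hv, ?_⟩
      have hmem := hf _ hv
      have h1 : nearTwin G k (f {w | nearTwin G k v w}) v := nt_symm hmem
      exact le_trans h1 hk

private lemma covered_to_uniform {n ℓ q : ℕ} (G : SimpleGraph (Fin n))
    (h : NearCovered G ℓ q) : NearUniform G ((4 * ℓ + 1) * 3 ^ (q * q)) q := by
  obtain ⟨S, hSq, hcov⟩ := h
  set K : ℕ → ℕ := fun i => (4 * ℓ + 1) * 3 ^ i with hK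
  have hKmono : ∀ i j, i ≤ j → K i ≤ K j := fun i j hij =>
    Nat.mul_le_mul_left _ (Nat.pow_le_pow_right (by norm_num) hij)
  have hKge : ∀ i, 4 * ℓ + 1 ≤ K i := by
    intro i
    have : (4 * ℓ + 1) * 1 ≤ (4 * ℓ + 1) * 3 ^ i :=
      Nat.mul_le_mul_left _ (Nat.one_le_pow _ _ (by norm_num))
    simpa [hK] using this
  have hKgap : ∀ i j, i < j → 2 * K i + 4 * ℓ + 1 ≤ K j := by
    intro i j hij
    have h1 : K (i + 1) ≤ K j := hKmono _ _ hij
    have h2 : K (i + 1) = 3 * K i := by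
      simp only [hK, pow_succ]; ring
    have h3 := hKge i
    omega
  have hmain : ∃ i, i ≤ q * q ∧ ∀ s ∈ S, ∀ t ∈ S,
      dG G s t ≤ 2 * K i + 2 * ℓ → dG G s t ≤ K i - 2 * ℓ := by
    by_contra hc
    push_neg at hc
    obtain ⟨s₀, hs₀, -⟩ := hc 0 (Nat.zero_le _)
    haveI : Nonempty (Fin n) := ⟨s₀⟩
    have hex : ∀ i ∈ Finset.range (q * q + 1), ∃ pr : Fin n × Fin n,
        pr.1 ∈ S ∧ pr.2 ∈ S ∧ dG G pr.1 pr.2 ≤ 2 * K i + 2 * ℓ ∧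
          K i - 2 * ℓ < dG G pr.1 pr.2 := by
      intro i hi
      obtain ⟨s, hs, t, ht, h1, h2⟩ := hc i (Nat.lt_succ_iff.mp (Finset.mem_range.mp hi))
      exact ⟨(s, t), hs, ht, h1, h2⟩
    choose! f hf1 hf2 hf3 hf4 using hex
    have hSfin : S.Finite := Set.toFinite S
    have key : (Finset.range (q * q + 1)).card ≤ (hSfin.toFinset ×ˢ hSfin.toFinset).card := by
      apply Finset.card_le_card_of_injOn f
      · intro i hi
        rw [Finset.mem_coe, Finset.mem_product]
        exact ⟨hSfin.mem_toFinset.2 (hf1 i hi), hSfin.mem_toFinset.2 (hf2 i hi)⟩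
      · intro i hi j hj hfe
        simp only [Finset.coe_range, Set.mem_Iio] at hi hj
        by_contra hne
        have hi' : i ∈ Finset.range (q * q + 1) := Finset.mem_range.2 hi
        have hj' : j ∈ Finset.range (q * q + 1) := Finset.mem_range.2 hj
        have e3i := hf3 i hi'
        have e4i := hf4 i hi'
        have e3j := hf3 j hj'
        have e4j := hf4 j hj'
        rw [hfe] at e3i e4i
        rcases Nat.lt_or_ge i j with hij | hij
        · have := hKgap i j hij
          have := hKge j
          omega
        · have := hKgap j i (by omega)
          have := hKge i
          omega
    rw [Finset.card_range, Finset.card_product] at key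
    have hFc : hSfin.toFinset.card ≤ q := by
      rwa [← Set.ncard_eq_toFinset_card]
    have := Nat.mul_le_mul hFc hFc
    omega
  obtain ⟨i, hiq, hgood⟩ := hmain
  have hKi := hKge i
  have hℓK : ℓ ≤ K i := by omega
  have htrans : ∀ {u v w : Fin n}, nearTwin G (K i) u v → nearTwin G (K i) v w →
      nearTwin G (K i) u w := by
    intro u v w huv hvw
    rw [nearTwin_iff_dG] at huv hvw ⊢
    obtain ⟨s, hs, hsu⟩ := hcov u
    obtain ⟨t, ht, htw⟩ := hcov w
    rw [nearTwin_iff_dG] at hsu htw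
    have h1 : dG G s t ≤ 2 * K i + 2 * ℓ := by
      have t1 := dG_triangle G s u v
      have t2 := dG_triangle G s v w
      have t3 := dG_triangle G s w t
      have hwt : dG G w t = dG G t w := dG_comm G w t
      omega
    have h2 : dG G s t ≤ K i - 2 * ℓ := hgood s hs t ht h1
    have t4 := dG_triangle G u s t
    have t5 := dG_triangle G u t w
    have hus : dG G u s = dG G s u := dG_comm G u s
    omega
  refine ⟨K i, hKmono i (q * q) hiq, ⟨nt_refl G (K i), nt_symm, htrans⟩, ?_⟩
  have hsub : {C : Set (Fin n) | ∃ u, C = {v | nearTwin G (K i) u v}} ⊆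
      (fun s => {v | nearTwin G (K i) s v}) '' S := by
    rintro C ⟨u, rfl⟩
    obtain ⟨s, hs, hsu⟩ := hcov u
    have hsu' : nearTwin G (K i) s u := le_trans hsu hℓK
    refine ⟨s, hs, ?_⟩
    ext v
    simp only [Set.mem_setOf_eq]
    exact ⟨fun hsv => htrans (nt_symm hsu') hsv, fun huv => htrans hsu' huv⟩
  calc {C : Set (Fin n) | ∃ u, C = {v | nearTwin G (K i) u v}}.ncard
      ≤ ((fun s => {v | nearTwin G (K i) s v}) '' S).ncard :=
        Set.ncard_le_ncard hsub (Set.toFinite _)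
    _ ≤ S.ncard := Set.ncard_image_le (Set.toFinite _)
    _ ≤ q := hSq

theorem stmt5 (C : ∀ n : ℕ, Set (SimpleGraph (Fin n))) :
    (∃ k₀ p : ℕ, ∀ n : ℕ, ∀ G ∈ C n, NearUniform G k₀ p) ↔
    (∃ ℓ q : ℕ, ∀ n : ℕ, ∀ G ∈ C n, NearCovered G ℓ q) := by
  constructor
  · rintro ⟨k₀, p, h⟩
    exact ⟨k₀, p, fun n G hG => uniform_to_covered G (h n G hG)⟩
  · rintro ⟨ℓ, q, h⟩
    exact ⟨(4 * ℓ + 1) * 3 ^ (q * q), q, fun n G hG => covered_to_uniform G (h n G hG)⟩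
end

section
/- For all ℓ, q ∈ ℕ there exist k₀, p ∈ ℕ, depending only on ℓ and q, such that every finite simple graph that is (ℓ,q)-near-covered is (k₀,p)-near-uniform. -/
/-- Auxiliary threshold sequence. -/
def gapA (ℓ : ℕ) : ℕ → ℕ
  | 0 => 0
  | i + 1 => 2 * gapA ℓ i + 4 * ℓ

lemma gapA_mono (ℓ : ℕ) : Monotone (gapA ℓ) := by
  apply monotone_nat_of_le_succ
  intro n
  show gapA ℓ n ≤ 2 * gapA ℓ n + 4 * ℓ
  omega

set_option maxHeartbeats 1000000 in
theorem stmt6 (ℓ q : ℕ) :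
    ∃ k₀ p : ℕ, ∀ (V : Type) [Fintype V] (G : SimpleGraph V),
      NearCovered G ℓ q → NearUniform G k₀ p := by
  classical
  refine ⟨2 * gapA ℓ (q * q) + 2 * ℓ, q, ?_⟩
  rintro V _ G ⟨S, hSq, hcov⟩
  set d : V → V → ℕ := fun u v =>
    (symmDiff (G.neighborSet u) (G.neighborSet v)).ncard with hd
  have hrefl : ∀ u, d u u = 0 := by
    intro u; simp [hd]
  have hsymm : ∀ u v, d u v = d v u := fun u v =>
    congrArg Set.ncard (symmDiff_comm _ _)
  have htri : ∀ u v w, d u w ≤ d u v + d v w := by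
    intro u v w
    calc d u w ≤ (symmDiff (G.neighborSet u) (G.neighborSet v) ∪
          symmDiff (G.neighborSet v) (G.neighborSet w)).ncard :=
        Set.ncard_le_ncard (symmDiff_triangle _ _ _) (Set.toFinite _)
      _ ≤ d u v + d v w := Set.ncard_union_le _ _
  have hnt : ∀ k (u v : V), nearTwin G k u v ↔ d u v ≤ k := fun _ _ _ => Iff.rfl
  -- the cover set as a finset
  have hSfin : S.Finite := Set.toFinite _
  have hTcard : hSfin.toFinset.card ≤ q := by
    rwa [Set.ncard_eq_toFinset_card' S, Set.toFinset_card,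
      ← Set.Finite.card_toFinset hSfin] at hSq
  -- pigeonhole: some gap interval is free of distances within S
  have hgapEx : ∃ i ≤ q * q, ∀ s ∈ S, ∀ s' ∈ S,
      ¬ (gapA ℓ i < d s s' ∧ d s s' ≤ gapA ℓ (i + 1)) := by
    by_contra hcon
    push_neg at hcon
    have hV : Nonempty V := by
      obtain ⟨s, hs, -, -, -, -⟩ := hcon 0 (Nat.zero_le _)
      exact ⟨s⟩
    have hcon' : ∀ i : ℕ, ∃ p : V × V, i ≤ q * q →
        p.1 ∈ S ∧ p.2 ∈ S ∧ gapA ℓ i < d p.1 p.2 ∧ d p.1 p.2 ≤ gapA ℓ (i + 1) := by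
      intro i
      by_cases hi : i ≤ q * q
      · obtain ⟨s, hs, s', hs', h1, h2⟩ := hcon i hi
        exact ⟨(s, s'), fun _ => ⟨hs, hs', h1, h2⟩⟩
      · exact ⟨(Classical.arbitrary _, Classical.arbitrary _), fun h => absurd h hi⟩
    choose g hg using hcon'
    have hmaps : ∀ i ∈ Finset.range (q * q + 1), g i ∈ hSfin.toFinset ×ˢ hSfin.toFinset := by
      intro i hi
      have hi' : i ≤ q * q := by simpa [Nat.lt_succ_iff] using hi
      obtain ⟨h1, h2, -, -⟩ := hg i hi'
      simp only [Finset.mem_product, Set.Finite.mem_toFinset]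
      exact ⟨h1, h2⟩
    have hcard : (hSfin.toFinset ×ˢ hSfin.toFinset).card < (Finset.range (q * q + 1)).card := by
      rw [Finset.card_product, Finset.card_range]
      nlinarith
    obtain ⟨i, hi, j, hj, hne, heq⟩ :=
      Finset.exists_ne_map_eq_of_card_lt_of_maps_to hcard hmaps
    have hi' : i ≤ q * q := by simpa [Nat.lt_succ_iff] using hi
    have hj' : j ≤ q * q := by simpa [Nat.lt_succ_iff] using hj
    obtain ⟨-, -, hi4, hi5⟩ := hg i hi'
    obtain ⟨-, -, hj4, hj5⟩ := hg j hj'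
    rw [heq] at hi4 hi5
    rcases Nat.lt_or_ge i j with hij | hij
    · have h1 : gapA ℓ (i + 1) ≤ gapA ℓ j := gapA_mono ℓ hij
      omega
    · have hji : j < i := by omega
      have h1 : gapA ℓ (j + 1) ≤ gapA ℓ i := gapA_mono ℓ hji
      omega
  obtain ⟨i, hiq, hgap⟩ := hgapEx
  set a := gapA ℓ i with ha
  have haq : a ≤ gapA ℓ (q * q) := gapA_mono ℓ hiq
  have hsucc : gapA ℓ (i + 1) = 2 * a + 4 * ℓ := rfl
  set k := 2 * a + 2 * ℓ with hk
  refine ⟨k, by omega, ?_, ?_⟩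
  · -- equivalence
    have htrans : ∀ {u v w : V}, d u v ≤ k → d v w ≤ k → d u w ≤ k := by
      intro u v w huv hvw
      obtain ⟨su, hsu, hsu'⟩ := hcov u
      obtain ⟨sv, hsv, hsv'⟩ := hcov v
      obtain ⟨sw, hsw, hsw'⟩ := hcov w
      rw [hnt] at hsu' hsv' hsw'
      -- d su sv ≤ a
      have key : ∀ x y : V, ∀ sx ∈ S, ∀ sy ∈ S, d sx x ≤ ℓ → d sy y ≤ ℓ →
          d x y ≤ k → d sx sy ≤ a := by
        intro x y sx hsx sy hsy h1 h2 h3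
        have t1 : d sx sy ≤ d sx x + d x y + d y sy := by
          have := htri sx x sy
          have := htri x y sy
          omega
        have h2' : d y sy ≤ ℓ := by rw [hsymm]; exact h2
        have hle : d sx sy ≤ gapA ℓ (i + 1) := by rw [hsucc]; omega
        have := hgap sx hsx sy hsy
        omega
      have h1 : d su sv ≤ a := key u v su hsu sv hsv hsu' hsv' huv
      have h2 : d sv sw ≤ a := key v w sv hsv sw hsw hsv' hsw' hvw
      have t1 : d u w ≤ d u su + d su sv + d sv sw + d sw w := by
        have := htri u su sw
        have := htri su sv sw
        have := htri u sw w
        omega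
      have hu' : d u su ≤ ℓ := by rw [hsymm]; exact hsu'
      have hw' : d sw w ≤ ℓ := hsw'
      omega
    refine ⟨fun u => by rw [hnt, hrefl]; omega,
      fun {u v} h => by rw [hnt] at h ⊢; rw [hsymm]; exact h,
      fun {u v w} h1 h2 => by rw [hnt] at h1 h2 ⊢; exact htrans h1 h2⟩
  · -- class count
    have htrans : ∀ {u v w : V}, d u v ≤ k → d v w ≤ k → d u w ≤ k := by
      intro u v w huv hvw
      obtain ⟨su, hsu, hsu'⟩ := hcov u
      obtain ⟨sv, hsv, hsv'⟩ := hcov v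
      obtain ⟨sw, hsw, hsw'⟩ := hcov w
      rw [hnt] at hsu' hsv' hsw'
      have key : ∀ x y : V, ∀ sx ∈ S, ∀ sy ∈ S, d sx x ≤ ℓ → d sy y ≤ ℓ →
          d x y ≤ k → d sx sy ≤ a := by
        intro x y sx hsx sy hsy h1 h2 h3
        have t1 : d sx sy ≤ d sx x + d x y + d y sy := by
          have := htri sx x sy
          have := htri x y sy
          omega
        have h2' : d y sy ≤ ℓ := by rw [hsymm]; exact h2
        have hle : d sx sy ≤ gapA ℓ (i + 1) := by rw [hsucc]; omega
        have := hgap sx hsx sy hsy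
        omega
      have h1 : d su sv ≤ a := key u v su hsu sv hsv hsu' hsv' huv
      have h2 : d sv sw ≤ a := key v w sv hsv sw hsw hsv' hsw' hvw
      have t1 : d u w ≤ d u su + d su sv + d sv sw + d sw w := by
        have := htri u su sw
        have := htri su sv sw
        have := htri u sw w
        omega
      have hu' : d u su ≤ ℓ := by rw [hsymm]; exact hsu'
      omega
    have hsub : {C : Set V | ∃ u, C = {v | nearTwin G k u v}} ⊆
        (fun s => {v | nearTwin G k s v}) '' S := by
      rintro C ⟨u, rfl⟩
      obtain ⟨s, hs, hsu⟩ := hcov u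
      rw [hnt] at hsu
      have hsu' : d s u ≤ k := by omega
      refine ⟨s, hs, ?_⟩
      ext v
      simp only [Set.mem_setOf_eq, hnt]
      constructor
      · intro h
        have hus : d u s ≤ k := by rw [hsymm]; exact hsu'
        exact htrans hus h
      · intro h
        exact htrans hsu' h
    calc {C : Set V | ∃ u, C = {v | nearTwin G k u v}}.ncard
        ≤ ((fun s => {v | nearTwin G k s v}) '' S).ncard :=
          Set.ncard_le_ncard hsub (hSfin.image _)
      _ ≤ S.ncard := Set.ncard_image_le hSfin
      _ ≤ q := hSq
end

section
/- Let ℓ ∈ ℕ and q ≥ 2. Every finite simple graph that is (ℓ,q)-near-covered is (2ℓ,q)-near-uniform or (8ℓ,q−1)-near-covered. -/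
lemma nearTwin_refl {V : Type*} (G : SimpleGraph V) (k : ℕ) (u : V) : nearTwin G k u u := by
  simp [nearTwin, symmDiff_self]

lemma nearTwin_symm {V : Type*} {G : SimpleGraph V} {k : ℕ} {u v : V}
    (h : nearTwin G k u v) : nearTwin G k v u := by
  unfold nearTwin at *
  rwa [symmDiff_comm]

lemma nearTwin_mono {V : Type*} {G : SimpleGraph V} {k k' : ℕ} {u v : V}
    (h : nearTwin G k u v) (hk : k ≤ k') : nearTwin G k' u v := le_trans h hk

lemma nearTwin_trans {V : Type*} [Fintype V] {G : SimpleGraph V} {k m : ℕ} {u v w : V}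
    (h1 : nearTwin G k u v) (h2 : nearTwin G m v w) : nearTwin G (k + m) u w := by
  unfold nearTwin at *
  calc (symmDiff (G.neighborSet u) (G.neighborSet w)).ncard
      ≤ ((symmDiff (G.neighborSet u) (G.neighborSet v)) ∪
          (symmDiff (G.neighborSet v) (G.neighborSet w))).ncard :=
        Set.ncard_le_ncard (symmDiff_triangle _ _ _) (Set.toFinite _)
    _ ≤ _ + _ := Set.ncard_union_le _ _
    _ ≤ k + m := Nat.add_le_add h1 h2

theorem stmt7 (ℓ q : ℕ) (hq : 2 ≤ q) (V : Type) [Fintype V] (G : SimpleGraph V)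
    (h : NearCovered G ℓ q) :
    NearUniform G (2 * ℓ) q ∨ NearCovered G (8 * ℓ) (q - 1) := by
  obtain ⟨S, hScard, hScov⟩ := h
  by_cases hex : ∃ s ∈ S, ∃ t ∈ S, s ≠ t ∧ nearTwin G (6 * ℓ) s t
  · right
    obtain ⟨s, hs, t, ht, hst, hstw⟩ := hex
    refine ⟨S \ {t}, ?_, ?_⟩
    · rw [Set.ncard_diff_singleton_of_mem ht]
      omega
    · intro v
      obtain ⟨s', hs', hs'v⟩ := hScov v
      by_cases h' : s' = t
      · subst h'
        exact ⟨s, ⟨hs, hst⟩, nearTwin_mono (nearTwin_trans hstw hs'v) (by omega)⟩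
      · exact ⟨s', ⟨hs', h'⟩, nearTwin_mono hs'v (by omega)⟩
  · left
    push_neg at hex
    -- no two distinct elements of S are near-6ℓ-twins
    have hsep : ∀ s ∈ S, ∀ t ∈ S, nearTwin G (6 * ℓ) s t → s = t := by
      intro s hs t ht hn
      by_contra hne
      exact hex s hs t ht hne hn
    choose f hfS hf using hScov
    have key : ∀ u v : V, nearTwin G (2 * ℓ) u v ↔ f u = f v := by
      intro u v
      constructor
      · intro huv
        apply hsep _ (hfS u) _ (hfS v)
        have : nearTwin G (ℓ + (2 * ℓ + ℓ)) (f u) (f v) :=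
          nearTwin_trans (hf u) (nearTwin_trans huv (nearTwin_symm (hf v)))
        exact nearTwin_mono this (by omega)
      · intro hfe
        have : nearTwin G (ℓ + ℓ) u v :=
          nearTwin_trans (nearTwin_symm (hf u)) (hfe ▸ hf v)
        exact nearTwin_mono this (by omega)
    refine ⟨2 * ℓ, le_rfl, ⟨fun u => nearTwin_refl G _ u, nearTwin_symm, ?_⟩, ?_⟩
    · intro u v w huv hvw
      exact (key u w).mpr (((key u v).mp huv).trans ((key v w).mp hvw))
    · have hff : ∀ u : V, f (f u) = f u := by
        intro u
        apply hsep _ (hfS (f u)) _ (hfS u)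
        exact nearTwin_mono (hf (f u)) (by omega)
      have hsub : {C : Set V | ∃ u, C = {v | nearTwin G (2 * ℓ) u v}} ⊆
          (fun s => {v | nearTwin G (2 * ℓ) s v}) '' S := by
        rintro C ⟨u, rfl⟩
        refine ⟨f u, hfS u, ?_⟩
        ext v
        simp only [Set.mem_setOf_eq, key, hff, eq_comm]
      calc {C : Set V | ∃ u, C = {v | nearTwin G (2 * ℓ) u v}}.ncard
          ≤ ((fun s => {v | nearTwin G (2 * ℓ) s v}) '' S).ncard :=
            Set.ncard_le_ncard hsub (Set.toFinite _)
        _ ≤ S.ncard := Set.ncard_image_le (Set.toFinite _)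
        _ ≤ q := hScard
end

section
/- Let k ≥ 1 be an integer and let G be a finite simple graph such that the near-k-twin relation ρ_k of G is an equivalence relation on V(G). Let V₁, …, V_m be those equivalence classes of ρ_k having more than 5k vertices, and let W = V₁ ∪ ⋯ ∪ V_m. Then there exist a set F₁ ⊆ {1,…,m}, a set F₂ of unordered pairs of distinct indices from {1,…,m}, and a simple graph G₂ on vertex set W of maximum degree at most 2km, such that for all distinct vertices u ∈ V_i and v ∈ V_j (with i = j allowed): {u,v} ∈ E(G) if and only if exactly one of the following holds: {u,v} ∈ E(G₂), or (i = j and i ∈ F₁), or (i ≠ j and {i,j} ∈ F₂). -/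
open scoped Classical



namespace NT

variable {V : Type} [Fintype V] (G : SimpleGraph V) (k : ℕ)

noncomputable def Cf (u : V) : Finset V := Finset.univ.filter (nearTwin G k u)
noncomputable def Nf (u : V) : Finset V := Finset.univ.filter (G.Adj u)

variable {G k}

lemma mem_Cf {u v : V} : v ∈ Cf G k u ↔ nearTwin G k u v := by simp [Cf]
lemma mem_Nf {u v : V} : v ∈ Nf G u ↔ G.Adj u v := by simp [Nf]

lemma ncard_cls (u : V) : {v | nearTwin G k u v}.ncard = (Cf G k u).card := by
  rw [Set.ncard_eq_toFinset_card']
  congr 1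
  ext v
  simp [Cf]

lemma nt_symdiff {u v : V} (h : nearTwin G k u v) :
    (symmDiff (Nf G u) (Nf G v)).card ≤ k := by
  have : (symmDiff (G.neighborSet u) (G.neighborSet v)).ncard
      = (symmDiff (Nf G u) (Nf G v)).card := by
    rw [Set.ncard_eq_toFinset_card']
    congr 1
    ext x
    rw [Set.mem_toFinset]
    simp [Nf, symmDiff, Set.mem_toFinset]
  have h' : (symmDiff (G.neighborSet u) (G.neighborSet v)).ncard ≤ k := h
  rwa [this] at h'

lemma diff_le_of_nt {u v : V} (h : nearTwin G k u v) (A : Finset V)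
    (hA : ∀ x ∈ A, G.Adj u x ∧ ¬ G.Adj v x) : A.card ≤ k := by
  refine le_trans (Finset.card_le_card ?_) (nt_symdiff h)
  intro x hx
  obtain ⟨h1, h2⟩ := hA x hx
  simp only [symmDiff, Finset.sup_eq_union, Finset.mem_union, Finset.mem_sdiff, mem_Nf]
  exact Or.inl ⟨h1, h2⟩


lemma dichotomy (hk : 1 ≤ k) (heq : Equivalence (nearTwin G k)) (u w₀ : V)
    (h5 : 5 * k < (Cf G k u).card) :
    (Cf G k w₀ ∩ Nf G u).card ≤ 2*k - 1 ∨
    (Cf G k w₀ \ insert u (Nf G u)).card ≤ 2*k - 1 := by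
  by_contra hcon
  push_neg at hcon
  obtain ⟨h1, h2⟩ := hcon
  obtain ⟨A, hA, hAcard⟩ := Finset.exists_subset_card_eq
    (show 2*k ≤ (Cf G k w₀ ∩ Nf G u).card by omega)
  obtain ⟨B, hB, hBcard⟩ := Finset.exists_subset_card_eq
    (show 2*k ≤ (Cf G k w₀ \ insert u (Nf G u)).card by omega)
  have hAu : ∀ x ∈ A, G.Adj u x := by
    intro x hx
    have := hA hx
    rw [Finset.mem_inter, mem_Nf] at this
    exact this.2
  have hBu : ∀ y ∈ B, ¬ G.Adj u y := by
    intro y hy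
    have := hB hy
    rw [Finset.mem_sdiff, Finset.mem_insert] at this
    intro hadj
    exact this.2 (Or.inr (mem_Nf.mpr hadj))
  have hAC : ∀ x ∈ A, nearTwin G k w₀ x := by
    intro x hx; exact mem_Cf.mp (Finset.mem_inter.mp (hA hx)).1
  have hBC : ∀ y ∈ B, nearTwin G k w₀ y := by
    intro y hy; exact mem_Cf.mp (Finset.mem_sdiff.mp (hB hy)).1
  set S := ∑ w ∈ Cf G k u,
    (A.filter (fun x => G.Adj w x)).card * (B.filter (fun y => ¬ G.Adj w y)).card with hS
  have lower : (5*k+1) * (k*k) ≤ S := by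
    have : ∀ w ∈ Cf G k u,
        k*k ≤ (A.filter (fun x => G.Adj w x)).card * (B.filter (fun y => ¬ G.Adj w y)).card := by
      intro w hw
      have hnt : nearTwin G k u w := mem_Cf.mp hw
      have e1 : (A.filter (fun x => ¬ G.Adj w x)).card ≤ k := by
        apply diff_le_of_nt hnt
        intro x hx
        rw [Finset.mem_filter] at hx
        exact ⟨hAu x hx.1, hx.2⟩
      have e2 : (B.filter (fun y => G.Adj w y)).card ≤ k := by
        apply diff_le_of_nt (heq.symm hnt)
        intro y hy
        rw [Finset.mem_filter] at hy
        exact ⟨hy.2, hBu y hy.1⟩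
      have s1 := Finset.card_filter_add_card_filter_not (s := A)
        (p := fun x => G.Adj w x)
      have s2 := Finset.card_filter_add_card_filter_not (s := B)
        (p := fun y => G.Adj w y)
      have f1 : k ≤ (A.filter (fun x => G.Adj w x)).card := by omega
      have f2 : k ≤ (B.filter (fun y => ¬ G.Adj w y)).card := by omega
      exact Nat.mul_le_mul f1 f2
    calc (5*k+1) * (k*k) ≤ (Cf G k u).card * (k*k) := by
          exact Nat.mul_le_mul_right _ (by omega)
      _ ≤ S := by
          rw [hS]
          simpa using Finset.card_nsmul_le_sum (Cf G k u) _ (k*k) this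
  have upper : S ≤ (2*k) * ((2*k) * k) := by
    have step1 : S = ∑ w ∈ Cf G k u, ∑ x ∈ A, ∑ y ∈ B,
        (if G.Adj w x ∧ ¬ G.Adj w y then 1 else 0) := by
      rw [hS]
      refine Finset.sum_congr rfl fun w _ => ?_
      rw [Finset.card_filter, Finset.card_filter, Finset.sum_mul_sum]
      refine Finset.sum_congr rfl fun x _ => Finset.sum_congr rfl fun y _ => ?_
      by_cases hx : G.Adj w x <;> by_cases hy : G.Adj w y <;> simp [hx, hy]
    have step2 : S = ∑ x ∈ A, ∑ y ∈ B, ∑ w ∈ Cf G k u,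
        (if G.Adj w x ∧ ¬ G.Adj w y then 1 else 0) := by
      rw [step1, Finset.sum_comm]
      exact Finset.sum_congr rfl fun x _ => Finset.sum_comm
    rw [step2]
    have inner : ∀ x ∈ A, ∀ y ∈ B, ∑ w ∈ Cf G k u,
        (if G.Adj w x ∧ ¬ G.Adj w y then 1 else 0) ≤ k := by
      intro x hx y hy
      rw [← Finset.card_filter]
      have hnt : nearTwin G k x y := heq.trans (heq.symm (hAC x hx)) (hBC y hy)
      apply diff_le_of_nt hnt
      intro w hw
      rw [Finset.mem_filter] at hw
      exact ⟨hw.2.1.symm, fun hc => hw.2.2 hc.symm⟩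
    calc ∑ x ∈ A, ∑ y ∈ B, ∑ w ∈ Cf G k u, (if G.Adj w x ∧ ¬ G.Adj w y then 1 else 0)
        ≤ ∑ x ∈ A, ∑ y ∈ B, k := by
          refine Finset.sum_le_sum fun x hx => Finset.sum_le_sum fun y hy => inner x hx y hy
      _ = (2*k) * ((2*k) * k) := by
          simp [Finset.sum_const, hAcard, hBcard, mul_assoc]
  nlinarith [hk, lower, upper]


noncomputable def Den (G : SimpleGraph V) (k : ℕ) (u w : V) : Prop :=
  (Cf G k w \ insert u (Nf G u)).card ≤ 2*k - 1

lemma cls_eq (heq : Equivalence (nearTwin G k)) {w w' : V} (h : nearTwin G k w w') :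
    Cf G k w = Cf G k w' := by
  ext x
  simp only [mem_Cf]
  exact ⟨fun hx => heq.trans (heq.symm h) hx, fun hx => heq.trans h hx⟩

lemma Den_congr_right (heq : Equivalence (nearTwin G k)) {u w w' : V}
    (h : nearTwin G k w w') : Den G k u w ↔ Den G k u w' := by
  unfold Den
  rw [cls_eq heq h]

lemma sparse_of_not_den (hk : 1 ≤ k) (heq : Equivalence (nearTwin G k)) {u w : V}
    (h5 : 5 * k < (Cf G k u).card) (hnd : ¬ Den G k u w) :
    (Cf G k w ∩ Nf G u).card ≤ 2*k - 1 :=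
  (dichotomy hk heq u w h5).resolve_right hnd

lemma cov (u w : V) :
    (Cf G k w).card ≤ (Cf G k w ∩ Nf G u).card + ((Cf G k w \ insert u (Nf G u)).card + 1) := by
  have hsub : Cf G k w ⊆ (Cf G k w ∩ Nf G u) ∪ insert u (Cf G k w \ insert u (Nf G u)) := by
    intro x hx
    by_cases hadj : G.Adj u x
    · exact Finset.mem_union_left _ (Finset.mem_inter.mpr ⟨hx, mem_Nf.mpr hadj⟩)
    · by_cases hxu : x = u
      · exact Finset.mem_union_right _ (by simp [hxu])
      · refine Finset.mem_union_right _ (Finset.mem_insert_of_mem ?_)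
        rw [Finset.mem_sdiff, Finset.mem_insert]
        exact ⟨hx, fun hc => hc.elim hxu (fun hm => hadj (mem_Nf.mp hm))⟩
  calc (Cf G k w).card ≤ _ := Finset.card_le_card hsub
    _ ≤ _ := le_trans (Finset.card_union_le _ _)
        (by gcongr; exact Finset.card_insert_le _ _)

lemma Den_congr_left (hk : 1 ≤ k) (heq : Equivalence (nearTwin G k)) {u u' w : V}
    (h : nearTwin G k u u') (h5u : 5 * k < (Cf G k u).card)
    (h5w : 5 * k < (Cf G k w).card) (hd : Den G k u w) : Den G k u' w := by
  by_contra hnd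
  have hcc : Cf G k u = Cf G k u' := cls_eq heq h
  have hsp : (Cf G k w ∩ Nf G u').card ≤ 2*k - 1 :=
    sparse_of_not_den hk heq (hcc ▸ h5u) hnd
  have hTk : (((Cf G k w ∩ Nf G u) \ Nf G u')).card ≤ k := by
    apply diff_le_of_nt h
    intro x hx
    rw [Finset.mem_sdiff, Finset.mem_inter, mem_Nf, mem_Nf] at hx
    exact ⟨hx.1.2, hx.2⟩
  have hsplit := Finset.card_sdiff_add_card_inter (Cf G k w ∩ Nf G u) (Nf G u')
  have hint : ((Cf G k w ∩ Nf G u) ∩ Nf G u').card ≤ 2*k - 1 := by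
    refine le_trans (Finset.card_le_card ?_) hsp
    intro x hx
    simp only [Finset.mem_inter] at hx ⊢
    exact ⟨hx.1.1, hx.2⟩
  have hcov := cov (G := G) (k := k) u w
  have hdd : (Cf G k w \ insert u (Nf G u)).card ≤ 2*k - 1 := hd
  omega

lemma Den_symm (hk : 1 ≤ k) (heq : Equivalence (nearTwin G k)) {u v : V}
    (hne : ¬ nearTwin G k u v) (h5u : 5 * k < (Cf G k u).card)
    (h5v : 5 * k < (Cf G k v).card) (hd : Den G k u v) : Den G k v u := by
  by_contra hnd
  have hdisj : ∀ x, x ∈ Cf G k u → x ∉ Cf G k v := by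
    intro x hxu hxv
    exact hne (heq.trans (mem_Cf.mp hxu) (heq.symm (mem_Cf.mp hxv)))
  have hden : ∀ u' ∈ Cf G k u, Den G k u' v := fun u' hu' =>
    Den_congr_left hk heq (mem_Cf.mp hu') h5u h5v hd
  have hspv : ∀ v' ∈ Cf G k v, (Cf G k u ∩ Nf G v').card ≤ 2*k - 1 := by
    intro v' hv'
    have hnd' : ¬ Den G k v' u := by
      intro hdv'
      exact hnd (Den_congr_left hk heq (heq.symm (mem_Cf.mp hv'))
        ((cls_eq heq (mem_Cf.mp hv')) ▸ h5v) h5u hdv')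
    exact sparse_of_not_den hk heq ((cls_eq heq (mem_Cf.mp hv')) ▸ h5v) hnd'
  set E := ∑ u' ∈ Cf G k u, ((Cf G k v).filter (fun x => G.Adj u' x)).card with hE
  have lower : (Cf G k u).card * (Cf G k v).card ≤ E + (Cf G k u).card * (2*k-1) := by
    have per : ∀ u' ∈ Cf G k u,
        (Cf G k v).card ≤ ((Cf G k v).filter (fun x => G.Adj u' x)).card + (2*k-1) := by
      intro u' hu'
      have hdd : (Cf G k v \ insert u' (Nf G u')).card ≤ 2*k-1 := hden u' hu'
      have hsub : (Cf G k v).filter (fun x => ¬ G.Adj u' x) ⊆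
          Cf G k v \ insert u' (Nf G u') := by
        intro x hx
        rw [Finset.mem_filter] at hx
        rw [Finset.mem_sdiff, Finset.mem_insert]
        refine ⟨hx.1, fun hc => ?_⟩
        rcases hc with hc | hc
        · exact hdisj u' hu' (hc ▸ hx.1)
        · exact hx.2 (mem_Nf.mp hc)
      have := Finset.card_filter_add_card_filter_not (s := Cf G k v)
        (p := fun x => G.Adj u' x)
      have := Finset.card_le_card hsub
      omega
    calc (Cf G k u).card * (Cf G k v).card
        = ∑ _u' ∈ Cf G k u, (Cf G k v).card := by rw [Finset.sum_const, smul_eq_mul]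
      _ ≤ ∑ u' ∈ Cf G k u, (((Cf G k v).filter (fun x => G.Adj u' x)).card + (2*k-1)) :=
          Finset.sum_le_sum per
      _ = E + (Cf G k u).card * (2*k-1) := by
          rw [Finset.sum_add_distrib, Finset.sum_const, smul_eq_mul, hE]
  have upper : E ≤ (Cf G k v).card * (2*k-1) := by
    have swap : E = ∑ x ∈ Cf G k v, ((Cf G k u).filter (fun u' => G.Adj u' x)).card := by
      rw [hE]
      simp only [Finset.card_filter]
      exact Finset.sum_comm
    rw [swap]
    calc ∑ x ∈ Cf G k v, ((Cf G k u).filter (fun u' => G.Adj u' x)).card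
        ≤ ∑ x ∈ Cf G k v, (2*k-1) := by
          refine Finset.sum_le_sum fun x hx => ?_
          refine le_trans (Finset.card_le_card ?_) (hspv x hx)
          intro u' hu'
          rw [Finset.mem_filter] at hu'
          rw [Finset.mem_inter, mem_Nf]
          exact ⟨hu'.1, hu'.2.symm⟩
      _ = (Cf G k v).card * (2*k-1) := by rw [Finset.sum_const, smul_eq_mul]
  obtain ⟨c, hc1, hc2⟩ : ∃ c, 2*k-1 = c ∧ 2*k = c+1 := ⟨2*k-1, rfl, by omega⟩
  have ha : 5*k+1 ≤ (Cf G k u).card := h5u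
  have hb : 5*k+1 ≤ (Cf G k v).card := h5v
  have h : (Cf G k u).card * (Cf G k v).card
      ≤ (2*k-1) * (Cf G k u).card + (2*k-1) * (Cf G k v).card := by
    have := le_trans lower (by omega : E + (Cf G k u).card * (2*k-1) ≤
      (Cf G k v).card * (2*k-1) + (Cf G k u).card * (2*k-1))
    nlinarith [this]
  nlinarith [hc1, hc2, mul_le_mul ha hb (by omega) (by omega), h]

end NT

lemma taut1 (a B C : Prop) (h : ¬ (B ∧ C)) :
    a ↔ (((a ↔ ¬(B ∨ C)) ∧ ¬B ∧ ¬C) ∨ (¬(a ↔ ¬(B ∨ C)) ∧ B ∧ ¬C) ∨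
      (¬(a ↔ ¬(B ∨ C)) ∧ ¬B ∧ C)) := by
  tauto

set_option maxHeartbeats 1000000
open NT

theorem stmt11 (V : Type) [Fintype V] (G : SimpleGraph V) (k : ℕ) (hk : 1 ≤ k)
    (heq : Equivalence (nearTwin G k)) (m : ℕ) (Vc : Fin m → Set V)
    (hclass : ∀ i, ∃ u, Vc i = {v | nearTwin G k u v})
    (hbig : ∀ i, 5 * k < (Vc i).ncard)
    (hinj : Function.Injective Vc)
    (hall : ∀ u : V, 5 * k < {v | nearTwin G k u v}.ncard →
      ∃ i, Vc i = {v | nearTwin G k u v}) :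
    ∃ (F₁ : Set (Fin m)) (F₂ : Set (Sym2 (Fin m))) (G₂ : SimpleGraph V),
      (∀ u v : V, G₂.Adj u v → u ∈ ⋃ i, Vc i) ∧
      (∀ v : V, (G₂.neighborSet v).ncard ≤ 2 * k * m) ∧
      (∀ (i j : Fin m) (u v : V), u ∈ Vc i → v ∈ Vc j → u ≠ v →
        (G.Adj u v ↔
          ((G₂.Adj u v ∧ ¬(i = j ∧ i ∈ F₁) ∧ ¬(i ≠ j ∧ s(i, j) ∈ F₂)) ∨
           (¬G₂.Adj u v ∧ (i = j ∧ i ∈ F₁) ∧ ¬(i ≠ j ∧ s(i, j) ∈ F₂)) ∨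
           (¬G₂.Adj u v ∧ ¬(i = j ∧ i ∈ F₁) ∧ (i ≠ j ∧ s(i, j) ∈ F₂))))) := by
  classical
  choose rep hrep using hclass
  have hmem : ∀ i (u : V), u ∈ Vc i ↔ nearTwin G k (rep i) u := by
    intro i u; rw [hrep i]; exact Iff.rfl
  have hrepmem : ∀ i, rep i ∈ Vc i := fun i => (hmem i _).mpr (heq.refl _)
  have hVcFin : ∀ j, (Vc j).toFinset = Cf G k (rep j) := by
    intro j; ext x; rw [Set.mem_toFinset, mem_Cf, hmem]
  have hbig' : ∀ i, 5 * k < (Cf G k (rep i)).card := by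
    intro i
    have := hbig i
    rwa [hrep i, ncard_cls] at this
  have hclsu : ∀ i (u : V), u ∈ Vc i → Cf G k (rep i) = Cf G k u := by
    intro i u hu
    exact cls_eq heq ((hmem i u).mp hu)
  have h5u : ∀ i (u : V), u ∈ Vc i → 5 * k < (Cf G k u).card := by
    intro i u hu; rw [← hclsu i u hu]; exact hbig' i
  have hntrep : ∀ i j, i ≠ j → ¬ nearTwin G k (rep i) (rep j) := by
    intro i j hij hnt
    apply hij
    apply hinj
    rw [hrep i, hrep j]
    ext x
    exact ⟨fun hx => heq.trans (heq.symm hnt) hx, fun hx => heq.trans hnt hx⟩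
  have hDen_iff : ∀ (i j : Fin m) (u v : V), u ∈ Vc i → v ∈ Vc j →
      (Den G k u v ↔ Den G k (rep i) (rep j)) := by
    intro i j u v hu hv
    have h1 : Den G k u v ↔ Den G k u (rep j) :=
      Den_congr_right heq (heq.symm ((hmem j v).mp hv))
    rw [h1]
    constructor
    · intro hd
      exact Den_congr_left hk heq (heq.symm ((hmem i u).mp hu)) (h5u i u hu) (hbig' j) hd
    · intro hd
      exact Den_congr_left hk heq ((hmem i u).mp hu) (hbig' i) (hbig' j) hd
  have hsymmr : Std.Symm (fun i j : Fin m => i ≠ j ∧ Den G k (rep i) (rep j)) := by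
    refine ⟨fun i j ⟨hij, hd⟩ => ?_⟩
    exact ⟨hij.symm, Den_symm hk heq (hntrep i j hij) (hbig' i) (hbig' j) hd⟩
  have hDsym : ∀ i j, i ≠ j → Den G k (rep i) (rep j) → Den G k (rep j) (rep i) := by
    intro i j hij hd
    exact Den_symm hk heq (hntrep i j hij) (hbig' i) (hbig' j) hd
  obtain ⟨G₂, hAdj⟩ : ∃ G₂ : SimpleGraph V, ∀ u v, G₂.Adj u v ↔
      (u ≠ v ∧ (∃ i, u ∈ Vc i) ∧ (∃ j, v ∈ Vc j) ∧
      (G.Adj u v ↔ ¬ (Den G k u v ∧ Den G k v u))) := by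
    refine ⟨⟨fun u v => u ≠ v ∧ (∃ i, u ∈ Vc i) ∧ (∃ j, v ∈ Vc j) ∧
      (G.Adj u v ↔ ¬ (Den G k u v ∧ Den G k v u)), ?_, ?_⟩, fun _ _ => Iff.rfl⟩
    · refine ⟨fun u v ⟨h1, h2, h3, h4⟩ => ?_⟩
      refine ⟨h1.symm, h3, h2, ?_⟩
      rw [G.adj_comm, and_comm] at h4
      exact h4
    · refine ⟨fun u h => ?_⟩
      exact h.1 rfl
  refine ⟨{i | Den G k (rep i) (rep i)}, Sym2.fromRel hsymmr, G₂, ?_, ?_, ?_⟩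
  · intro u v h
    obtain ⟨_, ⟨i, hi⟩, _, _⟩ := (hAdj u v).mp h
    exact Set.mem_iUnion.mpr ⟨i, hi⟩
  · -- degree bound
    intro v
    by_cases hvW : ∃ i, v ∈ Vc i
    · obtain ⟨i, hv⟩ := hvW
      rw [Set.ncard_eq_toFinset_card']
      have hsubNS : (G₂.neighborSet v).toFinset ⊆
          Finset.univ.biUnion (fun j => ((Vc j).toFinset).filter (fun u => G₂.Adj v u)) := by
        intro u hu
        rw [Set.mem_toFinset, SimpleGraph.mem_neighborSet] at hu
        obtain ⟨_, _, ⟨j, hj⟩, _⟩ := (hAdj v u).mp hu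
        exact Finset.mem_biUnion.mpr ⟨j, Finset.mem_univ _,
          Finset.mem_filter.mpr ⟨Set.mem_toFinset.mpr hj, hu⟩⟩
      have perclass : ∀ j, (((Vc j).toFinset).filter (fun u => G₂.Adj v u)).card ≤ 2 * k := by
        intro j
        by_cases hD : Den G k (rep i) (rep j) ∧ Den G k (rep j) (rep i)
        · have hdvj : Den G k v (rep j) :=
            (hDen_iff i j v (rep j) hv (hrepmem j)).mpr hD.1
          have hsub : ((Vc j).toFinset).filter (fun u => G₂.Adj v u) ⊆
              Cf G k (rep j) \ insert v (Nf G v) := by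
            intro u hu
            rw [Finset.mem_filter, Set.mem_toFinset] at hu
            obtain ⟨huj, hadj⟩ := hu
            obtain ⟨hne, _, _, hiff⟩ := (hAdj v u).mp hadj
            have hnadj : ¬ G.Adj v u := by
              intro hgadj
              exact (hiff.mp hgadj) ⟨(hDen_iff i j v u hv huj).mpr hD.1,
                (hDen_iff j i u v huj hv).mpr hD.2⟩
            rw [Finset.mem_sdiff, Finset.mem_insert]
            refine ⟨(hVcFin j) ▸ Set.mem_toFinset.mpr huj, fun hc => ?_⟩
            rcases hc with hc | hc
            · exact hne hc.symm
            · exact hnadj (mem_Nf.mp hc)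
          have := Finset.card_le_card hsub
          have hb : (Cf G k (rep j) \ insert v (Nf G v)).card ≤ 2 * k - 1 := hdvj
          omega
        · have hnd : ¬ Den G k (rep i) (rep j) := by
            intro h1
            apply hD
            refine ⟨h1, ?_⟩
            by_cases hij : i = j
            · exact hij ▸ (hij ▸ h1)
            · exact hDsym i j hij h1
          have hndv : ¬ Den G k v (rep j) := fun h =>
            hnd ((hDen_iff i j v (rep j) hv (hrepmem j)).mp h)
          have hsp : (Cf G k (rep j) ∩ Nf G v).card ≤ 2 * k - 1 :=
            sparse_of_not_den hk heq (h5u i v hv) hndv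
          have hsub : ((Vc j).toFinset).filter (fun u => G₂.Adj v u) ⊆
              Cf G k (rep j) ∩ Nf G v := by
            intro u hu
            rw [Finset.mem_filter, Set.mem_toFinset] at hu
            obtain ⟨huj, hadj⟩ := hu
            obtain ⟨hne, _, _, hiff⟩ := (hAdj v u).mp hadj
            have hgadj : G.Adj v u := by
              apply hiff.mpr
              intro ⟨hd1, _⟩
              exact hndv ((Den_congr_right heq (heq.symm ((hmem j u).mp huj))).mp hd1)
            exact Finset.mem_inter.mpr ⟨(hVcFin j) ▸ Set.mem_toFinset.mpr huj,
              mem_Nf.mpr hgadj⟩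
          have := Finset.card_le_card hsub
          omega
      calc (G₂.neighborSet v).toFinset.card
          ≤ (Finset.univ.biUnion
              (fun j => ((Vc j).toFinset).filter (fun u => G₂.Adj v u))).card :=
            Finset.card_le_card hsubNS
        _ ≤ ∑ j ∈ Finset.univ, (((Vc j).toFinset).filter (fun u => G₂.Adj v u)).card :=
            Finset.card_biUnion_le
        _ ≤ ∑ _j ∈ (Finset.univ : Finset (Fin m)), 2 * k :=
            Finset.sum_le_sum fun j _ => perclass j
        _ = 2 * k * m := by simp [Finset.sum_const, mul_comm]
    · have : G₂.neighborSet v = ∅ := by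
        ext u
        simp only [SimpleGraph.mem_neighborSet, Set.mem_empty_iff_false, iff_false]
        intro hadj
        obtain ⟨_, ⟨i, hi⟩, _, _⟩ := (hAdj v u).mp hadj
        exact hvW ⟨i, hi⟩
      rw [this]
      simp
  · intro i j u v hu hv huv
    have hDuv : Den G k u v ↔ Den G k (rep i) (rep j) := hDen_iff i j u v hu hv
    have hDvu : Den G k v u ↔ Den G k (rep j) (rep i) := hDen_iff j i v u hv hu
    have hF1 : (i ∈ {i | Den G k (rep i) (rep i)}) ↔ Den G k (rep i) (rep i) := Iff.rfl
    have hF2 : (s(i, j) ∈ Sym2.fromRel hsymmr) ↔ (i ≠ j ∧ Den G k (rep i) (rep j)) :=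
      Sym2.fromRel_prop
    have hP : (Den G k u v ∧ Den G k v u) ↔
        ((i = j ∧ i ∈ {i | Den G k (rep i) (rep i)}) ∨
         (i ≠ j ∧ s(i, j) ∈ Sym2.fromRel hsymmr)) := by
      rw [hDuv, hDvu, hF2]
      by_cases hij : i = j
      · subst hij
        simp only [Set.mem_setOf_eq]
        tauto
      · have h1 := hDsym i j hij
        have h2 := hDsym j i (fun h => hij h.symm)
        simp only [Set.mem_setOf_eq]
        tauto
    have hBC : ¬ ((i = j ∧ i ∈ {i | Den G k (rep i) (rep i)}) ∧
        (i ≠ j ∧ s(i, j) ∈ Sym2.fromRel hsymmr)) := by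
      intro ⟨⟨h1, _⟩, ⟨h2, _⟩⟩
      exact h2 h1
    have key : G₂.Adj u v ↔ (G.Adj u v ↔
        ¬ ((i = j ∧ i ∈ {i | Den G k (rep i) (rep i)}) ∨
           (i ≠ j ∧ s(i, j) ∈ Sym2.fromRel hsymmr))) := by
      rw [hAdj, ← hP]
      simp only [huv, hu, hv, ne_eq, not_false_iff, true_and]
      constructor
      · intro ⟨_, _, h⟩; exact h
      · intro h; exact ⟨⟨i, hu⟩, ⟨j, hv⟩, h⟩
    rw [key]
    exact taut1 _ _ _ hBC
end

section
/- Let k₀, p ∈ ℕ. There exist a finite set L of unary relation symbols ('labels') and a first-order formula ψ(x,y) with two free variables in the relational language consisting of one binary edge relation symbol together with the unary relation symbols of L, both depending only on k₀ and p, such that: for every finite simple graph H that is (k₀,p)-near-uniform, there exists a structure G_H in that language whose universe is V(H), whose binary relation is (the symmetrization of) the edge relation of a simple graph of maximum degree at most 2·k₀·p on V(H), such that for all distinct u, v ∈ V(H): {u,v} ∈ E(H) if and only if G_H ⊨ ψ(u,v) ∨ ψ(v,u). -/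
open FirstOrder

/-- Relation symbols for the language of labelled graphs: the unary symbols are the
labels from `Λ` and there is a single binary (edge) relation symbol. -/
def labelRels (Λ : Type) : ℕ → Type
  | 1 => Λ
  | 2 => PUnit
  | _ => Empty

/-- The first-order relational language with one binary edge relation symbol and
unary relation symbols given by the label set `Λ`. -/
def labelledGraphLang (Λ : Type) : FirstOrder.Language :=
  ⟨fun _ => Empty, labelRels Λ⟩

/-- The first-order structure on the vertex set of a simple graph `G` in which the binary
relation symbol is interpreted by adjacency in `G` and each unary label symbol `l` is
interpreted by the vertex set `lab l`. -/
def labelledStructure {Λ V : Type} (G : SimpleGraph V) (lab : Λ → Set V) :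
    (labelledGraphLang Λ).Structure V where
  funMap {n} f _ := f.elim
  RelMap {n} :=
    match n with
    | 0 => fun r _ => r.elim
    | 1 => fun l x => x 0 ∈ lab l
    | 2 => fun _ x => G.Adj (x 0) (x 1)
    | (_ + 3) => fun r _ => r.elim

/-- The graph interpreted by the formula `ψ(x,y)` in the labelled graph `(G, lab)`:
distinct vertices `u`, `v` are adjacent iff `ψ(u,v) ∨ ψ(v,u)` holds. -/
def interpGraph {Λ V : Type} (G : SimpleGraph V) (lab : Λ → Set V)
    (ψ : (labelledGraphLang Λ).Formula (Fin 2)) : SimpleGraph V where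
  Adj u v := u ≠ v ∧
    (letI := labelledStructure G lab
     ψ.Realize ![u, v] ∨ ψ.Realize ![v, u])
  symm := by
    refine ⟨?_⟩
    intro u v h
    exact ⟨Ne.symm h.1, h.2.elim Or.inr Or.inl⟩
  loopless := by
    refine ⟨?_⟩
    intro u h
    exact h.1 rfl


namespace Stmt12Aux
open FirstOrder.Language Finset
open scoped symmDiff

def edgeSym (Λ : Type) : (labelledGraphLang Λ).Relations 2 := PUnit.unit
def labelSym {Λ : Type} (a : Λ) : (labelledGraphLang Λ).Relations 1 := a
def edgeF (Λ : Type) : (labelledGraphLang Λ).Formula (Fin 2) :=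
  (edgeSym Λ).formula₂ (Term.var 0) (Term.var 1)

/-- size threshold distinguishing "small" and "big" near-twin classes -/
def T0 (k₀ : ℕ) : ℕ := 4 * (k₀ + 1) ^ 2

/-- The label alphabet: class index, index inside a small class (sentinel value `T0 k₀`),
default-adjacency bits towards each class, and adjacency bits towards each
member of each small class. -/
abbrev Lab (k₀ p : ℕ) : Type :=
  Fin (p + 1) × Fin (T0 k₀ + 1) × (Fin (p + 1) → Bool) × (Fin (p + 1) × Fin (T0 k₀) → Bool)

def smallIdx (k₀ : ℕ) (i : Fin (T0 k₀ + 1)) : Option (Fin (T0 k₀)) :=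
  if h : (i : ℕ) < T0 k₀ then some ⟨i, h⟩ else none

def deltaF (k₀ p : ℕ) (a b : Lab k₀ p) : (labelledGraphLang (Lab k₀ p)).Formula (Fin 2) :=
  match smallIdx k₀ a.2.1 with
  | some t => if b.2.2.2 (a.1, t) then ⊤ else ⊥
  | none =>
    match smallIdx k₀ b.2.1 with
    | some t => if a.2.2.2 (b.1, t) then ⊤ else ⊥
    | none => if a.2.2.1 b.1 then (edgeF _).not else edgeF _

def pairF (k₀ p : ℕ) (ab : Lab k₀ p × Lab k₀ p) : (labelledGraphLang (Lab k₀ p)).Formula (Fin 2) :=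
  (labelSym ab.1).formula₁ (Term.var 0) ⊓
    ((labelSym ab.2).formula₁ (Term.var 1) ⊓ deltaF k₀ p ab.1 ab.2)

noncomputable def psi (k₀ p : ℕ) : (labelledGraphLang (Lab k₀ p)).Formula (Fin 2) :=
  ((Finset.univ : Finset (Lab k₀ p × Lab k₀ p)).toList.map (pairF k₀ p)).foldr (· ⊔ ·) ⊥

lemma realize_labelF {Λ V : Type} (G : SimpleGraph V) (lab : Λ → Set V) (a : Λ)
    (i : Fin 2) (x : Fin 2 → V) :
    (letI := labelledStructure G lab
     Formula.Realize ((labelSym a).formula₁ (Term.var i)) x) ↔ x i ∈ lab a := by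
  letI := labelledStructure G lab
  rw [Formula.realize_rel₁]; exact Iff.rfl

lemma realize_edgeF {Λ V : Type} (G : SimpleGraph V) (lab : Λ → Set V) (x : Fin 2 → V) :
    (letI := labelledStructure G lab
     Formula.Realize (edgeF Λ) x) ↔ G.Adj (x 0) (x 1) := by
  letI := labelledStructure G lab
  rw [edgeF, Formula.realize_rel₂]; exact Iff.rfl

lemma realize_foldr_sup {L : Language} {M : Type*} [L.Structure M] {α : Type*}
    (l : List (L.Formula α)) (v : α → M) :
    (l.foldr (· ⊔ ·) ⊥).Realize v ↔ ∃ φ ∈ l, φ.Realize v := by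
  induction l with
  | nil => simp
  | cons φ l ih => simp [ih]

lemma realize_psi {k₀ p : ℕ} {V : Type} (G : SimpleGraph V) (tp : V → Lab k₀ p)
    (x : Fin 2 → V) :
    (letI := labelledStructure G (fun a => {w | tp w = a})
     Formula.Realize (psi k₀ p) x) ↔
    (letI := labelledStructure G (fun a => {w | tp w = a})
     Formula.Realize (deltaF k₀ p (tp (x 0)) (tp (x 1))) x) := by
  letI := labelledStructure G (fun a => {w | tp w = a})
  rw [psi, realize_foldr_sup]
  constructor
  · rintro ⟨φ, hφ, hr⟩
    simp only [List.mem_map, Finset.mem_toList, Finset.mem_univ, true_and] at hφ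
    obtain ⟨ab, _, rfl⟩ := hφ
    rw [pairF, Formula.realize_inf, Formula.realize_inf] at hr
    obtain ⟨h1, h2, h3⟩ := hr
    rw [realize_labelF] at h1 h2
    have e1 : tp (x 0) = ab.1 := h1
    have e2 : tp (x 1) = ab.2 := h2
    rw [e1, e2]; exact h3
  · intro h
    refine ⟨pairF k₀ p (tp (x 0), tp (x 1)), ?_, ?_⟩
    · exact List.mem_map_of_mem (Finset.mem_toList.2 (Finset.mem_univ _))
    · rw [pairF, Formula.realize_inf, Formula.realize_inf, realize_labelF, realize_labelF]
      exact ⟨rfl, rfl, h⟩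

lemma realize_deltaF_small_left {k₀ p : ℕ} {V : Type} (G : SimpleGraph V)
    (tp : V → Lab k₀ p) (x : Fin 2 → V) {a b : Lab k₀ p} {t : Fin (T0 k₀)}
    (h : smallIdx k₀ a.2.1 = some t) :
    (letI := labelledStructure G (fun a => {w | tp w = a})
     Formula.Realize (deltaF k₀ p a b) x) ↔ b.2.2.2 (a.1, t) = true := by
  letI := labelledStructure G (fun a => {w | tp w = a})
  rw [deltaF, h]
  by_cases hb : b.2.2.2 (a.1, t) <;> simp [hb]

lemma realize_deltaF_small_right {k₀ p : ℕ} {V : Type} (G : SimpleGraph V)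
    (tp : V → Lab k₀ p) (x : Fin 2 → V) {a b : Lab k₀ p} {t : Fin (T0 k₀)}
    (ha : smallIdx k₀ a.2.1 = none) (h : smallIdx k₀ b.2.1 = some t) :
    (letI := labelledStructure G (fun a => {w | tp w = a})
     Formula.Realize (deltaF k₀ p a b) x) ↔ a.2.2.2 (b.1, t) = true := by
  letI := labelledStructure G (fun a => {w | tp w = a})
  rw [deltaF, ha, h]
  by_cases hb : a.2.2.2 (b.1, t) <;> simp [hb]

lemma realize_deltaF_big {k₀ p : ℕ} {V : Type} (G : SimpleGraph V)
    (tp : V → Lab k₀ p) (x : Fin 2 → V) {a b : Lab k₀ p}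
    (ha : smallIdx k₀ a.2.1 = none) (hb : smallIdx k₀ b.2.1 = none) :
    (letI := labelledStructure G (fun a => {w | tp w = a})
     Formula.Realize (deltaF k₀ p a b) x) ↔
      (if a.2.2.1 b.1 then ¬ G.Adj (x 0) (x 1) else G.Adj (x 0) (x 1)) := by
  letI := labelledStructure G (fun a => {w | tp w = a})
  rw [deltaF, ha, hb]
  cases hd : a.2.2.1 b.1
  · simp only [hd, Bool.false_eq_true, if_false]
    rw [realize_edgeF]
  · simp only [hd, if_true]
    rw [Formula.realize_not, realize_edgeF]

section Comb
variable {V : Type} [DecidableEq V]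

lemma double_count (A B : Finset V) (P : V → V → Prop) [∀ u v : V, Decidable (P u v)] :
    ∑ u ∈ A, (B.filter (fun v => P u v)).card = ∑ v ∈ B, (A.filter (fun u => P u v)).card := by
  simp only [Finset.card_filter]
  exact Finset.sum_comm

lemma card_le_symmDiff_add {s t : Finset V} : s.card ≤ (s ∆ t).card + t.card := by
  have hsub : s ⊆ (s ∆ t) ∪ t := by
    intro v hv
    by_cases hvt : v ∈ t
    · exact Finset.mem_union_right _ hvt
    · exact Finset.mem_union_left _ (Finset.mem_symmDiff.2 (Or.inl ⟨hv, hvt⟩))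
  exact le_trans (Finset.card_le_card hsub) (Finset.card_union_le _ _)

lemma rowDichotomy (G : SimpleGraph V) [DecidableRel G.Adj] (k : ℕ) (A B : Finset V)
    (hrow : ∀ u ∈ A, ∀ u' ∈ A,
      ((B.filter (fun v => G.Adj u v)) ∆ (B.filter (fun v => G.Adj u' v))).card ≤ k)
    (hcol : ∀ v ∈ B, ∀ v' ∈ B,
      ((A.filter (fun u => G.Adj u v)) ∆ (A.filter (fun u => G.Adj u v'))).card ≤ k)
    (hn : k * k + k < A.card) :
    (∀ u ∈ A, (B.filter (fun v => G.Adj u v)).card ≤ 2 * k) ∨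
    (∀ u ∈ A, B.card ≤ (B.filter (fun v => G.Adj u v)).card + 2 * k) := by
  have hA : A.Nonempty := Finset.card_pos.1 (by omega)
  obtain ⟨u₀, hu₀⟩ := hA
  set S : Finset V := B.filter (fun v => G.Adj u₀ v) with hSdef
  have hSB : S ⊆ B := Finset.filter_subset _ _
  have hS : ∀ u ∈ A, ((B.filter (fun v => G.Adj u v)) ∆ S).card ≤ k :=
    fun u hu => hrow u hu u₀ hu₀
  by_cases h1 : S.card ≤ k
  · left
    intro u hu
    have h3 : (B.filter (fun v => G.Adj u v)).card ≤
        ((B.filter (fun v => G.Adj u v)) ∆ S).card + S.card := card_le_symmDiff_add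
    have := hS u hu
    omega
  by_cases h2 : B.card ≤ S.card + k
  · right
    intro u hu
    have h3 : S.card ≤ (S ∆ (B.filter (fun v => G.Adj u v))).card +
        (B.filter (fun v => G.Adj u v)).card := card_le_symmDiff_add
    rw [symmDiff_comm] at h3
    have := hS u hu
    omega
  -- contradiction case
  exfalso
  push_neg at h1 h2
  set Q : V → Finset V := fun v => A.filter (fun u => ¬ (G.Adj u v ↔ v ∈ S)) with hQ
  -- (1) total exception count
  have hsum : ∑ v ∈ B, (Q v).card ≤ k * A.card := by
    have e1 : ∑ v ∈ B, (Q v).card = ∑ u ∈ A, (B.filter (fun v => ¬ (G.Adj u v ↔ v ∈ S))).card :=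
      (double_count A B _).symm
    have e2 : ∀ u ∈ A, (B.filter (fun v => ¬ (G.Adj u v ↔ v ∈ S))).card ≤ k := by
      intro u hu
      have heq : B.filter (fun v => ¬ (G.Adj u v ↔ v ∈ S)) =
          (B.filter (fun v => G.Adj u v)) ∆ S := by
        ext v
        simp only [hSdef, Finset.mem_filter, Finset.mem_symmDiff]
        tauto
      rw [heq]
      exact hS u hu
    calc ∑ v ∈ B, (Q v).card = _ := e1
      _ ≤ ∑ _u ∈ A, k := Finset.sum_le_sum e2
      _ = k * A.card := by rw [Finset.sum_const, smul_eq_mul, mul_comm]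
  -- (2) minimizers
  have hSne : S.Nonempty := Finset.card_pos.1 (by omega)
  have hBSne : (B \ S).Nonempty := by
    rw [← Finset.card_pos, Finset.card_sdiff_of_subset hSB]; omega
  obtain ⟨v₁, hv₁, hv₁min⟩ := Finset.exists_min_image S (fun v => (Q v).card) hSne
  obtain ⟨v₂, hv₂, hv₂min⟩ := Finset.exists_min_image (B \ S) (fun v => (Q v).card) hBSne
  have hv₂B : v₂ ∈ B := (Finset.mem_sdiff.1 hv₂).1
  have hv₂S : v₂ ∉ S := (Finset.mem_sdiff.1 hv₂).2
  -- (3) pair bound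
  have hpair : A.card ≤ (Q v₁).card + (Q v₂).card + k := by
    have hsub : A ⊆ Q v₁ ∪ Q v₂ ∪
        ((A.filter (fun u => G.Adj u v₁)) ∆ (A.filter (fun u => G.Adj u v₂))) := by
      intro u hu
      simp only [hQ, Finset.mem_union, Finset.mem_filter, Finset.mem_symmDiff]
      by_cases ha1 : G.Adj u v₁ <;> by_cases ha2 : G.Adj u v₂ <;> tauto
    have c1 := Finset.card_le_card hsub
    have c2 := Finset.card_union_le (Q v₁ ∪ Q v₂)
        ((A.filter (fun u => G.Adj u v₁)) ∆ (A.filter (fun u => G.Adj u v₂)))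
    have c3 := Finset.card_union_le (Q v₁) (Q v₂)
    have c4 := hcol v₁ (hSB hv₁) v₂ hv₂B
    omega
  -- (4) lower bound on the sum
  have hlow : S.card * (Q v₁).card + (B \ S).card * (Q v₂).card ≤ ∑ v ∈ B, (Q v).card := by
    rw [← Finset.sum_sdiff hSB]
    have l1 : S.card * (Q v₁).card ≤ ∑ v ∈ S, (Q v).card := by
      calc S.card * (Q v₁).card = S.card • (Q v₁).card := by rw [smul_eq_mul]
        _ ≤ ∑ v ∈ S, (Q v).card := Finset.card_nsmul_le_sum _ _ _ hv₁min
    have l2 : (B \ S).card * (Q v₂).card ≤ ∑ v ∈ B \ S, (Q v).card := by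
      calc (B \ S).card * (Q v₂).card = (B \ S).card • (Q v₂).card := by rw [smul_eq_mul]
        _ ≤ ∑ v ∈ B \ S, (Q v).card := Finset.card_nsmul_le_sum _ _ _ hv₂min
    omega
  -- (5) arithmetic contradiction
  have hs1 : k + 1 ≤ S.card := h1
  have hs2 : k + 1 ≤ (B \ S).card := by rw [Finset.card_sdiff_of_subset hSB]; omega
  have key : (k + 1) * ((Q v₁).card + (Q v₂).card) ≤ k * A.card := by
    calc (k + 1) * ((Q v₁).card + (Q v₂).card)
        = (k + 1) * (Q v₁).card + (k + 1) * (Q v₂).card := by ring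
      _ ≤ S.card * (Q v₁).card + (B \ S).card * (Q v₂).card :=
          Nat.add_le_add (Nat.mul_le_mul_right _ hs1) (Nat.mul_le_mul_right _ hs2)
      _ ≤ ∑ v ∈ B, (Q v).card := hlow
      _ ≤ k * A.card := hsum
  nlinarith [key, hpair, hn]

end Comb

section Constr
variable {V : Type} [Fintype V] [DecidableEq V] (H : SimpleGraph V) [DecidableRel H.Adj]
  (k₀ p : ℕ) (cls : V → Fin (p + 1))

/-- the class with index `j` -/
def Cl (j : Fin (p + 1)) : Finset V := univ.filter (fun w => cls w = j)

lemma mem_Cl_self (u : V) : u ∈ Cl p cls (cls u) := by simp [Cl]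

/-- number of (ordered) adjacent pairs between class `i` and class `j` -/
def ee (i j : Fin (p + 1)) : ℕ := ∑ u ∈ Cl p cls i, ((Cl p cls j).filter (fun v => H.Adj u v)).card

/-- the "default adjacency" bit between classes `i` and `j` (majority) -/
def dd (i j : Fin (p + 1)) : Bool :=
  decide ((Cl p cls i).card * (Cl p cls j).card < 2 * ee H p cls i j)

lemma ee_symm (i j : Fin (p + 1)) : ee H p cls i j = ee H p cls j i := by
  unfold ee
  rw [double_count]
  refine Finset.sum_congr rfl fun v _ => ?_
  congr 1
  ext u
  simp [SimpleGraph.adj_comm]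

lemma dd_symm (i j : Fin (p + 1)) : dd H p cls i j = dd H p cls j i := by
  unfold dd
  rw [decide_eq_decide]
  rw [ee_symm H p cls i j, Nat.mul_comm]

/-- class `j` is big -/
def bigC (j : Fin (p + 1)) : Prop := T0 k₀ < (Cl p cls j).card

/-- the bounded-degree exception graph -/
def Gex : SimpleGraph V :=
  SimpleGraph.fromRel (fun u v =>
    bigC k₀ p cls (cls u) ∧ bigC k₀ p cls (cls v) ∧
      ¬ (H.Adj u v ↔ dd H p cls (cls u) (cls v) = true))

lemma gex_adj (u v : V) :
    (Gex H k₀ p cls).Adj u v ↔ u ≠ v ∧ bigC k₀ p cls (cls u) ∧ bigC k₀ p cls (cls v) ∧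
      ¬ (H.Adj u v ↔ dd H p cls (cls u) (cls v) = true) := by
  unfold Gex
  rw [SimpleGraph.fromRel_adj]
  constructor
  · rintro ⟨hne, h | h⟩
    · exact ⟨hne, h⟩
    · obtain ⟨h1, h2, h3⟩ := h
      refine ⟨hne, h2, h1, ?_⟩
      rw [SimpleGraph.adj_comm, dd_symm H p cls (cls u) (cls v)]
      exact h3
  · rintro ⟨hne, h⟩
    exact ⟨hne, Or.inl h⟩

/-- index of a vertex inside its (small) class -/
noncomputable def idxF (j : Fin (p + 1)) (u : V) : Fin (T0 k₀) :=
  if h : (Cl p cls j).card ≤ T0 k₀ ∧ u ∈ Cl p cls j then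
    Fin.castLE h.1 ((Cl p cls j).equivFin ⟨u, h.2⟩)
  else ⟨0, by unfold T0; positivity⟩

noncomputable def idx (u : V) : Fin (T0 k₀ + 1) :=
  if (Cl p cls (cls u)).card ≤ T0 k₀ then (idxF k₀ p cls (cls u) u).castSucc
  else Fin.last _

noncomputable def vert (j : Fin (p + 1)) (t : Fin (T0 k₀)) : Option V :=
  if h : (t : ℕ) < (Cl p cls j).card ∧ (Cl p cls j).card ≤ T0 k₀ then
    some (((Cl p cls j).equivFin.symm ⟨t, h.1⟩ : {x // x ∈ Cl p cls j}) : V)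
  else none

noncomputable def hbit (u : V) (jt : Fin (p + 1) × Fin (T0 k₀)) : Bool :=
  match vert k₀ p cls jt.1 jt.2 with
  | some w => decide (H.Adj u w)
  | none => false

lemma smallIdx_idx_of_small {u : V} (h : (Cl p cls (cls u)).card ≤ T0 k₀) :
    smallIdx k₀ (idx k₀ p cls u) = some (idxF k₀ p cls (cls u) u) := by
  unfold smallIdx idx
  rw [if_pos h]
  have hlt : ((idxF k₀ p cls (cls u) u).castSucc : ℕ) < T0 k₀ := by
    simpa using (idxF k₀ p cls (cls u) u).isLt
  rw [dif_pos hlt]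
  rfl

lemma smallIdx_idx_of_big {u : V} (h : ¬ (Cl p cls (cls u)).card ≤ T0 k₀) :
    smallIdx k₀ (idx k₀ p cls u) = none := by
  unfold smallIdx idx
  rw [if_neg h]
  simp [Fin.last]

lemma vert_idxF {u : V} (h : (Cl p cls (cls u)).card ≤ T0 k₀) :
    vert k₀ p cls (cls u) (idxF k₀ p cls (cls u) u) = some u := by
  have hmem : u ∈ Cl p cls (cls u) := mem_Cl_self p cls u
  unfold idxF
  rw [dif_pos ⟨h, hmem⟩]
  unfold vert
  have hval : ((Fin.castLE h ((Cl p cls (cls u)).equivFin ⟨u, hmem⟩) : Fin (T0 k₀)) : ℕ)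
      < (Cl p cls (cls u)).card := by
    simpa using ((Cl p cls (cls u)).equivFin ⟨u, hmem⟩).isLt
  rw [dif_pos ⟨hval, h⟩]
  congr 1
  have : (⟨((Fin.castLE h ((Cl p cls (cls u)).equivFin ⟨u, hmem⟩) : Fin (T0 k₀)) : ℕ), hval⟩ :
      Fin (Cl p cls (cls u)).card) = (Cl p cls (cls u)).equivFin ⟨u, hmem⟩ := by
    apply Fin.ext; simp
  rw [this, Equiv.symm_apply_apply]

lemma hbit_eq {u w : V} (h : (Cl p cls (cls w)).card ≤ T0 k₀) :
    hbit H k₀ p cls u (cls w, idxF k₀ p cls (cls w) w) = decide (H.Adj u w) := by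
  unfold hbit
  rw [vert_idxF k₀ p cls h]


variable {k : ℕ}

lemma nearTwin_row_bound {w w' : V} (h : nearTwin H k w w') (B : Finset V) :
    ((B.filter (fun v => H.Adj w v)) ∆ (B.filter (fun v => H.Adj w' v))).card ≤ k := by
  classical
  have hsub : (B.filter (fun v => H.Adj w v)) ∆ (B.filter (fun v => H.Adj w' v)) ⊆
      (H.neighborFinset w) ∆ (H.neighborFinset w') := by
    intro v hv
    simp only [Finset.mem_symmDiff, Finset.mem_filter, SimpleGraph.mem_neighborFinset] at hv ⊢
    tauto
  have hcard := Finset.card_le_card hsub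
  have hco : ((H.neighborFinset w) ∆ (H.neighborFinset w')).card =
      (symmDiff (H.neighborSet w) (H.neighborSet w')).ncard := by
    rw [← Set.ncard_coe_finset]
    congr 1
    rw [Finset.coe_symmDiff]
    simp [SimpleGraph.neighborFinset_def, Set.coe_toFinset]
  unfold nearTwin at h
  omega

lemma nearTwin_col_bound {w w' : V} (h : nearTwin H k w w') (A : Finset V) :
    ((A.filter (fun x => H.Adj x w)) ∆ (A.filter (fun x => H.Adj x w'))).card ≤ k := by
  classical
  have hsub : (A.filter (fun x => H.Adj x w)) ∆ (A.filter (fun x => H.Adj x w')) ⊆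
      (H.neighborFinset w) ∆ (H.neighborFinset w') := by
    intro v hv
    simp only [Finset.mem_symmDiff, Finset.mem_filter, SimpleGraph.mem_neighborFinset,
      SimpleGraph.adj_comm] at hv ⊢
    tauto
  have hcard := Finset.card_le_card hsub
  have hco : ((H.neighborFinset w) ∆ (H.neighborFinset w')).card =
      (symmDiff (H.neighborSet w) (H.neighborSet w')).ncard := by
    rw [← Set.ncard_coe_finset]
    congr 1
    rw [Finset.coe_symmDiff]
    simp [SimpleGraph.neighborFinset_def, Set.coe_toFinset]
  unfold nearTwin at h
  omega

noncomputable instance gexDec : DecidableRel (Gex H k₀ p cls).Adj :=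
  Classical.decRel _

lemma fiber_bound (hcls2 : ∀ u v : V, cls u = cls v → nearTwin H k u v) (hk : k ≤ k₀)
    (u : V) (j : Fin (p + 1)) :
    ((univ.filter (fun v => (Gex H k₀ p cls).Adj u v)).filter (fun v => cls v = j)).card
      ≤ 2 * k := by
  by_cases hbig : bigC k₀ p cls (cls u) ∧ bigC k₀ p cls j
  · obtain ⟨hbu, hbj⟩ := hbig
    set A : Finset V := Cl p cls (cls u) with hA
    set B : Finset V := Cl p cls j with hB
    have huA : u ∈ A := mem_Cl_self p cls u
    have hrow : ∀ w ∈ A, ∀ w' ∈ A,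
        ((B.filter (fun v => H.Adj w v)) ∆ (B.filter (fun v => H.Adj w' v))).card ≤ k := by
      intro w hw w' hw'
      simp only [hA, Cl, Finset.mem_filter] at hw hw'
      exact nearTwin_row_bound H (hcls2 w w' (hw.2.trans hw'.2.symm)) B
    have hcol : ∀ v ∈ B, ∀ v' ∈ B,
        ((A.filter (fun x => H.Adj x v)) ∆ (A.filter (fun x => H.Adj x v'))).card ≤ k := by
      intro v hv v' hv'
      simp only [hB, Cl, Finset.mem_filter] at hv hv'
      exact nearTwin_col_bound H (hcls2 v v' (hv.2.trans hv'.2.symm)) A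
    have hn : k * k + k < A.card := by
      have h1 : T0 k₀ < A.card := hbu
      have : k * k + k ≤ T0 k₀ := by unfold T0; nlinarith
      omega
    have hm : 4 * k < B.card := by
      have h1 : T0 k₀ < B.card := hbj
      have : 4 * k ≤ T0 k₀ := by unfold T0; nlinarith
      omega
    have hApos : 0 < A.card := Finset.card_pos.2 ⟨u, huA⟩
    rcases rowDichotomy H k A B hrow hcol hn with hdi | hdi
    · -- near-empty: default bit is false
      have hee : ee H p cls (cls u) j ≤ 2 * k * A.card := by
        unfold ee
        calc ∑ w ∈ A, ((B.filter (fun v => H.Adj w v))).card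
            ≤ ∑ _w ∈ A, 2 * k := Finset.sum_le_sum hdi
          _ = 2 * k * A.card := by rw [Finset.sum_const, smul_eq_mul, mul_comm]
      have hdd : dd H p cls (cls u) j = false := by
        unfold dd
        rw [← hA, ← hB]
        apply decide_eq_false
        have h4 : 4 * k * A.card < A.card * B.card := by
          calc 4 * k * A.card = A.card * (4 * k) := by ring
            _ < A.card * B.card := (Nat.mul_lt_mul_left hApos).2 hm
        have e1 : 2 * (2 * k * A.card) = 4 * k * A.card := by ring
        omega
      have hsub : (univ.filter (fun v => (Gex H k₀ p cls).Adj u v)).filter (fun v => cls v = j)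
          ⊆ B.filter (fun v => H.Adj u v) := by
        intro v hv
        simp only [Finset.mem_filter, Finset.mem_univ, true_and] at hv
        obtain ⟨hadj, hclsv⟩ := hv
        rw [gex_adj] at hadj
        obtain ⟨hne, _, _, hmis⟩ := hadj
        rw [hclsv, hdd] at hmis
        simp only [Bool.false_eq_true, iff_false, not_not] at hmis
        simp only [hB, Cl, Finset.mem_filter, Finset.mem_univ, true_and]
        exact ⟨hclsv, hmis⟩
      exact le_trans (Finset.card_le_card hsub) (hdi u huA)
    · -- near-full: default bit is true
      have hee : A.card * B.card ≤ ee H p cls (cls u) j + 2 * k * A.card := by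
        have hsum : ∑ _w ∈ A, B.card ≤
            ∑ w ∈ A, (((B.filter (fun v => H.Adj w v))).card + 2 * k) :=
          Finset.sum_le_sum hdi
        rw [Finset.sum_const, smul_eq_mul, Finset.sum_add_distrib, Finset.sum_const,
          smul_eq_mul] at hsum
        unfold ee
        rw [← hA, ← hB]
        have e2 : A.card * (2 * k) = 2 * k * A.card := by ring
        omega
      have hdd : dd H p cls (cls u) j = true := by
        unfold dd
        rw [← hA, ← hB]
        apply decide_eq_true
        have h4 : 4 * k * A.card < A.card * B.card := by
          calc 4 * k * A.card = A.card * (4 * k) := by ring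
            _ < A.card * B.card := (Nat.mul_lt_mul_left hApos).2 hm
        have e1 : 2 * (2 * k * A.card) = 4 * k * A.card := by ring
        omega
      have hsub : (univ.filter (fun v => (Gex H k₀ p cls).Adj u v)).filter (fun v => cls v = j)
          ⊆ B \ (B.filter (fun v => H.Adj u v)) := by
        intro v hv
        simp only [Finset.mem_filter, Finset.mem_univ, true_and] at hv
        obtain ⟨hadj, hclsv⟩ := hv
        rw [gex_adj] at hadj
        obtain ⟨hne, _, _, hmis⟩ := hadj
        rw [hclsv, hdd] at hmis
        simp only [iff_true] at hmis
        have hvB : v ∈ B := by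
          simp only [hB, Cl, Finset.mem_filter, Finset.mem_univ, true_and]; exact hclsv
        simp only [Finset.mem_sdiff, Finset.mem_filter]
        exact ⟨hvB, fun hx => hmis hx.2⟩
      have hc1 := Finset.card_le_card hsub
      have hc2 : (B \ (B.filter (fun v => H.Adj u v))).card
          = B.card - (B.filter (fun v => H.Adj u v)).card :=
        Finset.card_sdiff_of_subset (Finset.filter_subset _ _)
      have := hdi u huA
      omega
  · -- one of the classes is not big: no exceptional edges at all
    have : (univ.filter (fun v => (Gex H k₀ p cls).Adj u v)).filter (fun v => cls v = j) = ∅ := by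
      apply Finset.eq_empty_of_forall_notMem
      intro v hv
      simp only [Finset.mem_filter, Finset.mem_univ, true_and] at hv
      obtain ⟨hadj, hclsv⟩ := hv
      rw [gex_adj] at hadj
      exact hbig ⟨hadj.2.1, hclsv ▸ hadj.2.2.1⟩
    rw [this]
    simp

lemma gex_degree (hcls2 : ∀ u v : V, cls u = cls v → nearTwin H k u v) (hk : k ≤ k₀)
    (hcard : (univ.image cls).card ≤ p) (u : V) :
    (univ.filter (fun v => (Gex H k₀ p cls).Adj u v)).card ≤ 2 * k₀ * p := by
  have hfib := Finset.card_eq_sum_card_fiberwise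
    (f := fun v => cls v) (s := univ.filter (fun v => (Gex H k₀ p cls).Adj u v))
    (t := univ) (fun x _ => Finset.mem_univ _)
  rw [hfib]
  have hbound : ∀ j ∈ (univ : Finset (Fin (p + 1))),
      ((univ.filter (fun v => (Gex H k₀ p cls).Adj u v)).filter (fun v => cls v = j)).card
        ≤ if j ∈ univ.image cls then 2 * k else 0 := by
    intro j _
    by_cases hj : j ∈ univ.image cls
    · rw [if_pos hj]
      exact fiber_bound H k₀ p cls hcls2 hk u j
    · rw [if_neg hj]
      have : (univ.filter (fun v => (Gex H k₀ p cls).Adj u v)).filter (fun v => cls v = j)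
          = ∅ := by
        apply Finset.eq_empty_of_forall_notMem
        intro v hv
        simp only [Finset.mem_filter, Finset.mem_univ, true_and] at hv
        exact hj (Finset.mem_image.2 ⟨v, Finset.mem_univ _, hv.2⟩)
      rw [this]; simp
  calc ∑ j ∈ univ, ((univ.filter (fun v => (Gex H k₀ p cls).Adj u v)).filter
        (fun v => cls v = j)).card
      ≤ ∑ j ∈ univ, (if j ∈ univ.image cls then 2 * k else 0) := Finset.sum_le_sum hbound
    _ = ∑ j ∈ univ.image cls, 2 * k := by
        rw [Finset.sum_ite_mem, Finset.univ_inter]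
    _ = (univ.image cls).card * (2 * k) := by rw [Finset.sum_const, smul_eq_mul]
    _ ≤ p * (2 * k₀) := Nat.mul_le_mul hcard (by omega)
    _ = 2 * k₀ * p := by ring

end Constr

noncomputable def tp {V : Type} [Fintype V] [DecidableEq V] (H : SimpleGraph V)
    [DecidableRel H.Adj] (k₀ p : ℕ) (cls : V → Fin (p + 1)) (u : V) : Lab k₀ p :=
  (cls u, idx k₀ p cls u, fun j => dd H p cls (cls u) j, fun jt => hbit H k₀ p cls u jt)

lemma realize_delta_adj {V : Type} [Fintype V] [DecidableEq V] (H : SimpleGraph V)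
    [DecidableRel H.Adj] (k₀ p : ℕ) (cls : V → Fin (p + 1)) (u v : V) (huv : u ≠ v) :
    (letI := labelledStructure (Gex H k₀ p cls) (fun a => {w | tp H k₀ p cls w = a})
     Formula.Realize (deltaF k₀ p (tp H k₀ p cls u) (tp H k₀ p cls v)) ![u, v]) ↔
      H.Adj u v := by
  by_cases hu : (Cl p cls (cls u)).card ≤ T0 k₀
  · refine (realize_deltaF_small_left _ _ _
      (smallIdx_idx_of_small k₀ p cls hu)).trans ?_
    show hbit H k₀ p cls v (cls u, idxF k₀ p cls (cls u) u) = true ↔ _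
    rw [hbit_eq H k₀ p cls hu]
    simp [SimpleGraph.adj_comm]
  · by_cases hv : (Cl p cls (cls v)).card ≤ T0 k₀
    · refine (realize_deltaF_small_right _ _ _
        (smallIdx_idx_of_big k₀ p cls hu) (smallIdx_idx_of_small k₀ p cls hv)).trans ?_
      show hbit H k₀ p cls u (cls v, idxF k₀ p cls (cls v) v) = true ↔ _
      rw [hbit_eq H k₀ p cls hv]
      simp
    · refine (realize_deltaF_big _ _ _
        (smallIdx_idx_of_big k₀ p cls hu) (smallIdx_idx_of_big k₀ p cls hv)).trans ?_
      have hbu : bigC k₀ p cls (cls u) := not_le.1 hu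
      have hbv : bigC k₀ p cls (cls v) := not_le.1 hv
      show (if dd H p cls (cls u) (cls v) then ¬ (Gex H k₀ p cls).Adj u v
        else (Gex H k₀ p cls).Adj u v) ↔ _
      cases hd : dd H p cls (cls u) (cls v)
      · simp only [Bool.false_eq_true, if_false]
        rw [gex_adj]
        constructor
        · rintro ⟨-, -, -, hmis⟩
          rw [hd] at hmis
          simpa using hmis
        · intro hadj
          refine ⟨huv, hbu, hbv, ?_⟩
          rw [hd]
          simp [hadj]
      · simp only [if_true]
        rw [gex_adj]
        constructor
        · intro hmis
          by_contra hadj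
          exact hmis ⟨huv, hbu, hbv, by rw [hd]; simpa using hadj⟩
        · intro hadj hcon
          obtain ⟨-, -, -, hmis⟩ := hcon
          rw [hd] at hmis
          exact hmis (by simpa using hadj)

end Stmt12Aux

theorem stmt12 (k₀ p : ℕ) :
    ∃ (Λ : Type) (_ : Finite Λ) (ψ : (labelledGraphLang Λ).Formula (Fin 2)),
      ∀ (V : Type) [Fintype V] (H : SimpleGraph V), NearUniform H k₀ p →
        ∃ (G' : SimpleGraph V) (lab : Λ → Set V),
          (∀ v : V, (G'.neighborSet v).ncard ≤ 2 * k₀ * p) ∧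
          ∀ u v : V, u ≠ v →
            (H.Adj u v ↔
              (letI := labelledStructure G' lab
               ψ.Realize ![u, v] ∨ ψ.Realize ![v, u])) := by
  classical
  refine ⟨Stmt12Aux.Lab k₀ p, Finite.of_fintype _, Stmt12Aux.psi k₀ p, ?_⟩
  intro V _ H hNU
  letI : DecidableEq V := Classical.decEq V
  letI : DecidableRel H.Adj := Classical.decRel _
  obtain ⟨k, hk, hEq, hcard⟩ := hNU
  -- the setoid of near-k-twins
  letI S : Setoid V := ⟨nearTwin H k, hEq⟩
  letI : DecidableRel (fun a b : V => a ≈ b) := fun _ _ => Classical.propDecidable _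
  -- the quotient injects into the set of classes, of which there are at most p
  have hresp : ∀ a b : V, a ≈ b → {v | nearTwin H k a v} = {v | nearTwin H k b v} := by
    intro a b hab
    ext x
    exact ⟨fun h => hEq.trans (hEq.symm hab) h, fun h => hEq.trans hab h⟩
  have hQcard : Fintype.card (Quotient S) ≤ p := by
    set CS : Set (Set V) := {C : Set V | ∃ u, C = {v | nearTwin H k u v}} with hCS
    have hfin : CS.Finite := Set.toFinite _
    let F : Quotient S → CS := Quotient.lift
      (fun u => (⟨{v | nearTwin H k u v}, ⟨u, rfl⟩⟩ : CS))
      (fun a b hab => Subtype.ext (hresp a b hab))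
    have hFinj : Function.Injective F := by
      intro q₁ q₂ hF
      induction q₁ using Quotient.ind
      induction q₂ using Quotient.ind
      rename_i a b
      have hset : {v | nearTwin H k a v} = {v | nearTwin H k b v} :=
        congrArg Subtype.val hF
      have hb : b ∈ {v | nearTwin H k a v} := by
        rw [hset]; exact hEq.refl b
      exact Quotient.sound hb
    have h1 : Nat.card (Quotient S) ≤ Nat.card CS :=
      Nat.card_le_card_of_injective F hFinj
    rw [Nat.card_eq_fintype_card] at h1
    have h2 : Nat.card CS = CS.ncard := (Nat.card_coe_set_eq CS)
    omega
  -- the class-index function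
  have hle : Fintype.card (Quotient S) ≤ p + 1 := by omega
  let cls : V → Fin (p + 1) := fun u =>
    Fin.castLE hle ((Fintype.equivFin (Quotient S)) (Quotient.mk S u))
  have hcls2 : ∀ u v : V, cls u = cls v → nearTwin H k u v := by
    intro u v h
    have h1 : (Fintype.equivFin (Quotient S)) (Quotient.mk S u) =
        (Fintype.equivFin (Quotient S)) (Quotient.mk S v) := by
      apply Fin.castLE_injective hle
      exact h
    have h2 : Quotient.mk S u = Quotient.mk S v := (Fintype.equivFin (Quotient S)).injective h1
    exact Quotient.exact h2
  have himg : ((Finset.univ : Finset V).image cls).card ≤ p := by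
    have e1 : (Finset.univ : Finset V).image cls =
        ((Finset.univ : Finset V).image (fun u => Quotient.mk S u)).image
          (fun q => Fin.castLE hle ((Fintype.equivFin (Quotient S)) q)) := by
      rw [Finset.image_image]
      rfl
    calc ((Finset.univ : Finset V).image cls).card
        ≤ ((Finset.univ : Finset V).image (fun u => Quotient.mk S u)).card := by
          rw [e1]; exact Finset.card_image_le
      _ ≤ Fintype.card (Quotient S) := Finset.card_le_univ _
      _ ≤ p := hQcard
  refine ⟨Stmt12Aux.Gex H k₀ p cls, fun a => {w | Stmt12Aux.tp H k₀ p cls w = a}, ?_, ?_⟩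
  · -- degree bound
    intro v
    have hset : (Stmt12Aux.Gex H k₀ p cls).neighborSet v =
        ↑(Finset.univ.filter (fun w => (Stmt12Aux.Gex H k₀ p cls).Adj v w)) := by
      ext w
      simp [SimpleGraph.mem_neighborSet]
    rw [hset, Set.ncard_coe_finset]
    exact Stmt12Aux.gex_degree H k₀ p cls hcls2 hk himg v
  · -- correctness of the interpretation
    intro u v huv
    have e1 := (Stmt12Aux.realize_psi (Stmt12Aux.Gex H k₀ p cls)
        (Stmt12Aux.tp H k₀ p cls) ![u, v]).trans
      (Stmt12Aux.realize_delta_adj H k₀ p cls u v huv)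
    have e2 := (Stmt12Aux.realize_psi (Stmt12Aux.Gex H k₀ p cls)
        (Stmt12Aux.tp H k₀ p cls) ![v, u]).trans
      (Stmt12Aux.realize_delta_adj H k₀ p cls v u huv.symm)
    constructor
    · intro hadj
      exact Or.inl (e1.2 hadj)
    · rintro (h | h)
      · exact e1.1 h
      · exact H.adj_comm v u |>.1 (e2.1 h)
end

section
/- Let ℓ, q ∈ ℕ, let H be a finite simple graph, and let H' be a graph obtained from H by adding finitely many isolated vertices. If H' is (ℓ,q)-near-covered, then H is (2ℓ,q)-near-covered. -/
theorem stmt15 (ℓ q : ℕ) (V W : Type) [Fintype V] [Fintype W]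
    (H : SimpleGraph V) (H' : SimpleGraph (V ⊕ W))
    (hemb : ∀ u v : V, H'.Adj (Sum.inl u) (Sum.inl v) ↔ H.Adj u v)
    (hiso : ∀ (w : W) (x : V ⊕ W), ¬ H'.Adj (Sum.inr w) x)
    (hcov : NearCovered H' ℓ q) :
    NearCovered H (2 * ℓ) q := by
  classical
  obtain ⟨S, hS, hScov⟩ := hcov
  by_cases hV : Nonempty V
  · obtain ⟨v₀⟩ := hV
    have hN : ∀ a : V, H'.neighborSet (Sum.inl a) = Sum.inl '' H.neighborSet a := by
      intro a
      ext x
      cases x with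
      | inl b => simp [SimpleGraph.mem_neighborSet, hemb]
      | inr w =>
        simp only [SimpleGraph.mem_neighborSet, Set.mem_image]
        constructor
        · intro h; exact absurd h.symm (hiso w (Sum.inl a))
        · rintro ⟨_, _, h⟩; exact absurd h (by simp)
    have hNr : ∀ w : W, H'.neighborSet (Sum.inr w) = ∅ := by
      intro w; ext x; simp [SimpleGraph.mem_neighborSet, hiso w x]
    have hcard : ∀ (a : V) (w : W), nearTwin H' ℓ (Sum.inr w) (Sum.inl a) →
        (H.neighborSet a).ncard ≤ ℓ := by
      intro a w h
      unfold nearTwin at h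
      rwa [hNr, hN, show (∅ : Set (V ⊕ W)) = ⊥ from rfl, bot_symmDiff,
        Set.ncard_image_of_injective _ Sum.inl_injective] at h
    let f : V ⊕ W → V := fun s => match s with
      | Sum.inl a => a
      | Sum.inr w => if h : ∃ u, nearTwin H' ℓ (Sum.inr w) (Sum.inl u) then h.choose else v₀
    refine ⟨f '' S, le_trans (Set.ncard_image_le S.toFinite) hS, ?_⟩
    intro v
    obtain ⟨s, hsS, hst⟩ := hScov (Sum.inl v)
    refine ⟨f s, Set.mem_image_of_mem f hsS, ?_⟩
    cases s with
    | inl a =>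
      unfold nearTwin at hst ⊢
      rw [hN, hN, ← Set.image_symmDiff Sum.inl_injective,
        Set.ncard_image_of_injective _ Sum.inl_injective] at hst
      exact le_trans hst (by omega)
    | inr w =>
      have hex : ∃ u, nearTwin H' ℓ (Sum.inr w) (Sum.inl u) := ⟨v, hst⟩
      have hfu : f (Sum.inr w) = hex.choose := dif_pos hex
      rw [hfu]
      have h1 : (H.neighborSet hex.choose).ncard ≤ ℓ := hcard _ w hex.choose_spec
      have h2 : (H.neighborSet v).ncard ≤ ℓ := hcard _ w hst
      unfold nearTwin
      calc (symmDiff (H.neighborSet hex.choose) (H.neighborSet v)).ncard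
          ≤ (H.neighborSet hex.choose ∪ H.neighborSet v).ncard :=
            Set.ncard_le_ncard symmDiff_le_sup (Set.toFinite _)
        _ ≤ (H.neighborSet hex.choose).ncard + (H.neighborSet v).ncard :=
            Set.ncard_union_le _ _
        _ ≤ 2 * ℓ := by omega
  · exact ⟨∅, by simp, fun v => (hV ⟨v⟩).elim⟩
end
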